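/- arXiv:1609.00476 — 3 statements merged into one kernel-verified Lean document; each statement's English description precedes it below -/
import Mathlib

section
/- The sequence csd(S_{2^n}), where S_{2^n} is the quasi-dihedral group of order 2^n (n ≥ 4), converges to 0 as n → ∞. -/
open Pointwise

/-- The cyclic subgroup commutativity degree of a group `G`: the proportion of
pairs of cyclic subgroups `(H, K)` of `G` with `HK = KH`. -/
noncomputable def csd (G : Type*) [Group G] : ℚ :=
  (Nat.card {pr : Subgroup G × Subgroup G //
      IsCyclic ↥pr.1 ∧ IsCyclic ↥pr.2 ∧
      (pr.1 : Set G) * (pr.2 : Set G) = (pr.2 : Set G) * (pr.1 : Set G)} : ℚ) /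
  (Nat.card {H : Subgroup G // IsCyclic ↥H} : ℚ) ^ 2

open Subgroup



-- helper: cyclic subgroup has a generator in G
lemma exists_zpowers_eq {G : Type*} [Group G] (H : Subgroup G) (h : IsCyclic ↥H) :
    ∃ g : G, g ∈ H ∧ H = Subgroup.zpowers g := by
  obtain ⟨⟨g, hg⟩, hgen⟩ := h.exists_generator
  refine ⟨g, hg, le_antisymm (fun a ha => ?_) (zpowers_le.2 hg)⟩
  obtain ⟨k, hk⟩ := Subgroup.mem_zpowers_iff.1 (hgen ⟨a, ha⟩)
  exact Subgroup.mem_zpowers_iff.2 ⟨k, by simpa using congrArg Subtype.val hk⟩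

-- helper: zpowers is cyclic
lemma isCyclic_zpowers {G : Type*} [Group G] (g : G) : IsCyclic ↥(Subgroup.zpowers g) := by
  refine ⟨⟨⟨g, Subgroup.mem_zpowers g⟩, fun a => ?_⟩⟩
  obtain ⟨k, hk⟩ := Subgroup.mem_zpowers_iff.1 a.2
  exact Subgroup.mem_zpowers_iff.2 ⟨k, Subtype.ext (by simpa using hk)⟩

-- helper: fibers bound
lemma ncard_le_of_fibers {α β : Type*} [Fintype α] [Finite β] (R : Set (α × β)) (m : ℕ)
    (h : ∀ a : α, ({b | (a, b) ∈ R}).ncard ≤ m) : R.ncard ≤ Fintype.card α * m := by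
  classical
  haveI : ∀ a : α, Fintype {b | (a, b) ∈ R} := fun a => Fintype.ofFinite _
  have e : R ≃ Σ a : α, {b | (a, b) ∈ R} :=
    { toFun := fun p => ⟨p.1.1, p.1.2, p.2⟩
      invFun := fun s => ⟨(s.1, s.2.1), s.2.2⟩
      left_inv := fun p => rfl
      right_inv := fun s => rfl }
  rw [← Nat.card_coe_set_eq, Nat.card_congr e, Nat.card_eq_fintype_card,
    Fintype.card_sigma]
  calc ∑ a : α, Fintype.card {b | (a, b) ∈ R}
      ≤ ∑ _a : α, m := Finset.sum_le_sum (fun a _ => by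
        rw [← Nat.card_eq_fintype_card, Nat.card_coe_set_eq]; exact h a)
    _ = Fintype.card α * m := by simp [Finset.sum_const, Finset.card_univ, mul_comm]


lemma subgroup_eq_of_card_eq {α : Type*} [Group α] [Fintype α] [IsCyclic α]
    {H K : Subgroup α} (h : Nat.card H = Nat.card K) : H = K := by
  classical
  set c := Nat.card H with hc
  have hc0 : 0 < c := Nat.card_pos
  have key : ∀ (L : Subgroup α), Nat.card L = c → (L : Set α) = {a : α | a ^ c = 1} := by
    intro L hL
    have hsub : (L : Set α) ⊆ {a : α | a ^ c = 1} := by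
      intro a ha
      have : (⟨a, ha⟩ : L) ^ c = 1 := by
        rw [← hL]; exact pow_card_eq_one'
      simpa using congrArg Subtype.val this
    have hE : ({a : α | a ^ c = 1}).ncard ≤ c := by
      have := IsCyclic.card_pow_eq_one_le (α := α) hc0
      rw [Set.ncard_eq_toFinset_card']
      simpa using this
    refine Set.eq_of_subset_of_ncard_le hsub ?_ (Set.toFinite _)
    have : (L : Set α).ncard = c := by rw [← Nat.card_coe_set_eq]; simpa using hL
    omega
  have h1 := key H rfl
  have h2 := key K h.symm
  exact SetLike.coe_injective (h1.trans h2.symm)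


structure QD {G : Type*} [Group G] (r : ℕ) (x y : G) : Prop where
  hr : 2 ≤ r
  hx : orderOf x = 2 ^ (r + 1)
  hy : orderOf y = 2
  hrel : y⁻¹ * x * y = x ^ (2 ^ r - 1)
  hsup : Subgroup.zpowers x ⊔ Subgroup.zpowers y = ⊤
  hcard : Nat.card G = 2 ^ (r + 2)

namespace QD
variable {G : Type*} [Group G] {r : ℕ} {x y : G}

lemma y2 (h : QD r x y) : y * y = 1 := by
  have := pow_orderOf_eq_one y; rw [h.hy, pow_two] at this; exact this

lemma yinv (h : QD r x y) : y⁻¹ = y := by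
  exact inv_eq_of_mul_eq_one_right h.y2

lemma conj1 (h : QD r x y) : y * x * y⁻¹ = x ^ (2 ^ r - 1) := by
  have := h.hrel
  rw [h.yinv] at this ⊢
  exact this

/-- Conjugation of integer powers. -/
lemma conj (h : QD r x y) (i : ℤ) : y * x ^ i * y⁻¹ = x ^ (((2:ℤ) ^ r - 1) * i) := by
  have h1 : y * x ^ i * y⁻¹ = (y * x * y⁻¹) ^ i := by
    simpa using (map_zpow (MulAut.conj y) x i)
  rw [h1, h.conj1]
  have hcast : ((2 ^ r - 1 : ℕ) : ℤ) = (2:ℤ) ^ r - 1 := by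
    push_cast [Nat.one_le_two_pow]; ring
  rw [← zpow_natCast x (2 ^ r - 1), ← zpow_mul, hcast]

lemma xpow_zpow_eq_one (h : QD r x y) {i : ℤ} (hi : ((2:ℤ)^(r+1)) ∣ i) : x ^ i = 1 := by
  rw [← orderOf_dvd_iff_zpow_eq_one, h.hx]
  exact_mod_cast hi

lemma zsq (h : QD r x y) : (x ^ (2^r) : G) * x ^ (2^r) = 1 := by
  rw [← pow_add]
  have : 2 ^ r + 2 ^ r = 2 ^ (r + 1) := by ring
  rw [this, ← h.hx, pow_orderOf_eq_one]

lemma zne (h : QD r x y) : (x ^ (2^r) : G) ≠ 1 := by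
  intro hz
  have := orderOf_dvd_of_pow_eq_one hz
  rw [h.hx] at this
  have := Nat.le_of_dvd (by positivity) this
  have : (2:ℕ) ^ r < 2 ^ (r+1) := by
    exact Nat.pow_lt_pow_right (by norm_num) (by omega)
  omega

lemma zcomm (h : QD r x y) (g : G) : g * x ^ (2^r) = x ^ (2^r) * g := by
  have hr1 : 1 ≤ r := le_trans one_le_two h.hr
  have hyz : y * x ^ (2^r) * y⁻¹ = x ^ (2^r) := by
    have h1 : y * x ^ ((2^r : ℕ) : ℤ) * y⁻¹ = x ^ (((2:ℤ) ^ r - 1) * ((2^r : ℕ) : ℤ)) := h.conj _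
    rw [zpow_natCast] at h1
    rw [h1]
    have h2r : (2:ℤ)^r * 2^r = 2^(r+1) * 2^(r-1) := by
      rw [← pow_add, ← pow_add]; congr 1; omega
    have hsplit : ((2:ℤ) ^ r - 1) * ((2^r : ℕ) : ℤ) = (2:ℤ)^(r+1) * 2^(r-1) + (- ((2^r : ℕ) : ℤ)) := by
      push_cast; linear_combination h2r
    rw [hsplit, zpow_add, h.xpow_zpow_eq_one ⟨2^(r-1), rfl⟩, one_mul, zpow_neg, zpow_natCast]
    exact inv_eq_of_mul_eq_one_right h.zsq
  have hx' : x ∈ Subgroup.centralizer {x ^ (2^r)} := by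
    rw [Subgroup.mem_centralizer_iff]
    rintro s hs
    rw [Set.mem_singleton_iff] at hs; subst hs
    exact pow_mul_comm' x (2^r)
  have hy' : y ∈ Subgroup.centralizer {x ^ (2^r)} := by
    rw [Subgroup.mem_centralizer_iff]
    rintro s hs
    rw [Set.mem_singleton_iff] at hs; subst hs
    calc x ^ 2^r * y = (y * x^2^r * y⁻¹) * y := by rw [hyz]
      _ = y * x^2^r := by group
  have hmem : Subgroup.zpowers x ⊔ Subgroup.zpowers y ≤ Subgroup.centralizer {x ^ (2^r)} :=
    sup_le (zpowers_le.2 hx') (zpowers_le.2 hy')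
  rw [h.hsup] at hmem
  exact (Subgroup.mem_centralizer_iff.1 (hmem (Subgroup.mem_top g)) _ (Set.mem_singleton _)).symm

lemma cardN (h : QD r x y) : Nat.card (Subgroup.zpowers x) = 2^(r+1) := by
  rw [Nat.card_zpowers, h.hx]

lemma indexN (h : QD r x y) : (Subgroup.zpowers x).index = 2 := by
  have h1 := Subgroup.card_mul_index (Subgroup.zpowers x)
  rw [h.cardN, h.hcard] at h1
  have h2 : (2:ℕ)^(r+2) = 2^(r+1) * 2 := by ring
  rw [h2] at h1
  exact Nat.eq_of_mul_eq_mul_left (by positivity) h1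

lemma mulmemN (h : QD r x y) {a b : G} (ha : a ∉ Subgroup.zpowers x)
    (hb : b ∉ Subgroup.zpowers x) : a * b ∈ Subgroup.zpowers x :=
  (Subgroup.mul_mem_iff_of_index_two h.indexN).2 (iff_of_false ha hb)

lemma ynotmem (h : QD r x y) : y ∉ Subgroup.zpowers x := by
  intro hy
  have h1 : Subgroup.zpowers x = ⊤ := by
    have := h.hsup
    rwa [sup_eq_left.2 (zpowers_le.2 hy)] at this
  have h2 := h.indexN
  rw [h1, Subgroup.index_top] at h2
  omega

lemma form (h : QD r x y) {g : G} (hg : g ∉ Subgroup.zpowers x) : ∃ a : ℤ, g = x ^ a * y := by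
  obtain ⟨a, ha⟩ := Subgroup.mem_zpowers_iff.1 (h.mulmemN hg h.ynotmem)
  refine ⟨a, ?_⟩
  rw [ha, mul_assoc, h.y2, mul_one]

lemma zmem_pair_zpow (h : QD r x y) (t : ℤ) :
    (x ^ (2^r) : G) ^ t ∈ ({1, x ^ (2^r)} : Set G) := by
  have hz2 : (x ^ (2^r) : G) ^ (2:ℤ) = 1 := by
    rw [zpow_two]; exact h.zsq
  rcases Int.even_or_odd t with ⟨s, hs⟩ | ⟨s, hs⟩
  · left
    rw [hs, show s + s = 2 * s by ring, zpow_mul, hz2, one_zpow]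
  · right
    rw [hs, zpow_add, zpow_mul, hz2, one_zpow, one_mul, zpow_one]
    exact rfl

lemma pair_subset_N (h : QD r x y) : ({1, x ^ (2^r)} : Set G) ⊆ (Subgroup.zpowers x : Set G) := by
  rintro w (rfl | rfl)
  · exact (Subgroup.zpowers x).one_mem
  · exact Subgroup.mem_zpowers_iff.2 ⟨(2^r : ℕ), by rw [zpow_natCast]⟩

lemma pair_mul (h : QD r x y) {w₁ w₂ : G} (h1 : w₁ ∈ ({1, x ^ (2^r)} : Set G))
    (h2 : w₂ ∈ ({1, x ^ (2^r)} : Set G)) : w₁ * w₂ ∈ ({1, x ^ (2^r)} : Set G) := by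
  rcases h1 with rfl | rfl <;> rcases h2 with rfl | rfl <;>
    simp [h.zsq, Set.mem_insert_iff]

lemma gsq (h : QD r x y) {g : G} (hg : g ∉ Subgroup.zpowers x) :
    g * g ∈ ({1, x ^ (2^r)} : Set G) := by
  obtain ⟨a, rfl⟩ := h.form hg
  have hc : y * x ^ a * y⁻¹ = x ^ (((2:ℤ)^r - 1) * a) := h.conj a
  have key : (x ^ a * y) * (x ^ a * y) = x ^ ((2:ℤ)^r * a) := by
    calc (x ^ a * y) * (x ^ a * y) = x ^ a * (y * x ^ a * y⁻¹) * (y * y) := by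
          group
      _ = x ^ a * x ^ (((2:ℤ)^r - 1) * a) * 1 := by rw [hc, h.y2]
      _ = x ^ (a + ((2:ℤ)^r - 1) * a) := by rw [mul_one, ← zpow_add]
      _ = x ^ ((2:ℤ)^r * a) := by ring_nf
  rw [key]
  have : x ^ ((2:ℤ)^r * a) = (x ^ (2^r : ℕ) : G) ^ a := by
    rw [← zpow_natCast x (2^r), ← zpow_mul]
    congr 1
  rw [this]
  exact h.zmem_pair_zpow a

lemma centN (h : QD r x y) {g c : G} (hg : g ∉ Subgroup.zpowers x)
    (hcm : c ∈ Subgroup.zpowers x) (hcomm : c * g = g * c) :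
    c ∈ ({1, x ^ (2^r)} : Set G) := by
  have hr2 : 2 ≤ r := h.hr
  have hr1 : 1 ≤ r := le_trans one_le_two h.hr
  obtain ⟨a, rfl⟩ := h.form hg
  obtain ⟨i, rfl⟩ := Subgroup.mem_zpowers_iff.1 hcm
  -- rewrite the commutation equation
  have hL : x ^ i * (x ^ a * y) = x ^ (i + a) * y := by rw [← mul_assoc, ← zpow_add]
  have hR : (x ^ a * y) * x ^ i = x ^ (a + ((2:ℤ)^r - 1) * i) * y := by
    calc (x ^ a * y) * x ^ i = x ^ a * (y * x ^ i * y⁻¹) * y := by group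
      _ = x ^ a * x ^ (((2:ℤ)^r - 1) * i) * y := by rw [h.conj i]
      _ = x ^ (a + ((2:ℤ)^r - 1) * i) * y := by rw [← zpow_add]
  rw [hL, hR] at hcomm
  have heq : x ^ (i + a) = x ^ (a + ((2:ℤ)^r - 1) * i) := mul_right_cancel hcomm
  have h1 : x ^ ((i + a) - (a + ((2:ℤ)^r - 1) * i)) = 1 := by
    rw [zpow_sub, heq, mul_inv_cancel]
  have hdvd : ((orderOf x : ℤ)) ∣ ((i + a) - (a + ((2:ℤ)^r - 1) * i)) :=
    orderOf_dvd_iff_zpow_eq_one.2 h1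
  rw [h.hx] at hdvd
  have hdvd2 : ((2:ℤ)^(r+1)) ∣ i * (2 - 2^r) := by
    have hcast : (((2:ℕ)^(r+1) : ℕ) : ℤ) = (2:ℤ)^(r+1) := by push_cast; ring
    rw [hcast] at hdvd
    convert hdvd using 1
    ring
  -- extract: 2^r ∣ i
  have h2r : (2:ℤ)^r = 2 * 2^(r-1) := by
    rw [← pow_succ', Nat.sub_add_cancel hr1]
  have hdvd3 : ((2:ℤ)^r) ∣ i * ((2:ℤ)^(r-1) - 1) := by
    have he : i * (2 - 2^r) = -(2 * (i * ((2:ℤ)^(r-1) - 1))) := by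
      rw [h2r]; ring
    rw [he, dvd_neg] at hdvd2
    have h21 : (2:ℤ)^(r+1) = 2 * 2^r := by rw [pow_succ']
    rw [h21] at hdvd2
    exact (mul_dvd_mul_iff_left (by norm_num : (2:ℤ) ≠ 0)).1 hdvd2
  have hodd : Odd ((2:ℤ)^(r-1) - 1) := by
    refine ⟨2^(r-2) - 1, ?_⟩
    have : (2:ℤ)^(r-1) = 2 * 2^(r-2) := by
      rw [← pow_succ', show r - 2 + 1 = r - 1 by omega]
    rw [this]; ring
  have hdvd4 : ((2:ℤ)^r) ∣ i := by
    have hn : (2:ℕ)^r ∣ i.natAbs * ((2:ℤ)^(r-1) - 1).natAbs := by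
      simpa [Int.natAbs_mul, Int.natAbs_pow] using Int.natAbs_dvd_natAbs.2 hdvd3
    have hcop : Nat.Coprime (2^r) ((2:ℤ)^(r-1) - 1).natAbs := by
      apply Nat.Coprime.pow_left
      rw [Nat.Prime.coprime_iff_not_dvd Nat.prime_two, Nat.two_dvd_ne_zero, ← Nat.odd_iff]
      exact Int.natAbs_odd.2 hodd
    have h5 : ((2^r : ℕ) : ℤ) ∣ (i.natAbs : ℤ) :=
      Int.natCast_dvd_natCast.2 (hcop.dvd_of_dvd_mul_right hn)
    have h6 := Int.dvd_natAbs.1 h5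
    simpa using h6
  obtain ⟨t, rfl⟩ := hdvd4
  have : x ^ ((2:ℤ)^r * t) = (x ^ ((2:ℕ)^r) : G) ^ t := by
    rw [← zpow_natCast x (2^r), ← zpow_mul]
    congr 1
  rw [this]
  exact h.zmem_pair_zpow t

lemma cent_ncard_le (h : QD r x y) [Fintype G] {g : G} (hg : g ∉ Subgroup.zpowers x) :
    ({c : G | c * g = g * c}).ncard ≤ 4 := by
  set Cg := {c : G | c * g = g * c} with hCg
  have hsplit : Cg = (Cg ∩ (Subgroup.zpowers x : Set G)) ∪ (Cg \ (Subgroup.zpowers x : Set G)) :=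
    (Set.inter_union_diff Cg _).symm
  have hinter : (Cg ∩ (Subgroup.zpowers x : Set G)).ncard ≤ 2 := by
    have hsub : Cg ∩ (Subgroup.zpowers x : Set G) ⊆ ({1, x ^ (2^r)} : Set G) := by
      rintro c ⟨hc1, hc2⟩
      exact h.centN hg hc2 hc1
    calc (Cg ∩ (Subgroup.zpowers x : Set G)).ncard ≤ ({1, x ^ (2^r)} : Set G).ncard :=
          Set.ncard_le_ncard hsub (Set.toFinite _)
      _ ≤ 2 := by
          apply le_trans (Set.ncard_insert_le _ _)
          simp
  have hdiff : (Cg \ (Subgroup.zpowers x : Set G)).ncard ≤ 2 := by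
    rcases Set.eq_empty_or_nonempty (Cg \ (Subgroup.zpowers x : Set G)) with he | ⟨c₀, hc₀⟩
    · simp [he]
    · have : (Cg \ (Subgroup.zpowers x : Set G)).ncard ≤
          (Cg ∩ (Subgroup.zpowers x : Set G)).ncard := by
        apply Set.ncard_le_ncard_of_injOn (fun c => c₀⁻¹ * c)
        · rintro c ⟨hc1, hc2⟩
          constructor
          · have hcc : Commute c g := hc1
            have hcc₀ : Commute c₀ g := hc₀.1
            exact (hcc₀.inv_left.mul_left hcc : Commute (c₀⁻¹ * c) g)
          · exact h.mulmemN (fun hmm => hc₀.2 ((Subgroup.zpowers x).inv_mem_iff.1 hmm)) hc2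
        · intro c1 _ c2 _ hcc
          exact mul_left_cancel hcc
      omega
  have hu := Set.ncard_union_le (Cg ∩ (Subgroup.zpowers x : Set G))
    (Cg \ (Subgroup.zpowers x : Set G))
  rw [Set.inter_union_diff] at hu
  omega

lemma fiber_ncard_le (h : QD r x y) [Fintype G] (g w : G) :
    ({k : G | g * k * g⁻¹ * k⁻¹ = w}).ncard ≤ ({c : G | c * g = g * c}).ncard := by
  rcases Set.eq_empty_or_nonempty ({k : G | g * k * g⁻¹ * k⁻¹ = w}) with he | ⟨k₀, hk₀⟩
  · simp [he]
  · apply Set.ncard_le_ncard_of_injOn (fun k => k₀⁻¹ * k)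
    · intro k hk
      have h1 : k * g⁻¹ * k⁻¹ = k₀ * g⁻¹ * k₀⁻¹ := by
        apply mul_left_cancel (a := g)
        calc g * (k * g⁻¹ * k⁻¹) = g * k * g⁻¹ * k⁻¹ := by group
          _ = g * k₀ * g⁻¹ * k₀⁻¹ := by rw [hk, ← hk₀]
          _ = g * (k₀ * g⁻¹ * k₀⁻¹) := by group
      have h2 : (k₀⁻¹ * k) * g⁻¹ = g⁻¹ * (k₀⁻¹ * k) := by
        calc (k₀⁻¹ * k) * g⁻¹ = k₀⁻¹ * (k * g⁻¹ * k⁻¹) * k := by group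
          _ = k₀⁻¹ * (k₀ * g⁻¹ * k₀⁻¹) * k := by rw [h1]
          _ = g⁻¹ * (k₀⁻¹ * k) := by group
      have h3 : Commute (k₀⁻¹ * k) g⁻¹ := h2
      have h4 := h3.inv_right
      rw [inv_inv] at h4
      exact h4
    · intro k1 _ k2 _ hkk
      exact mul_left_cancel hkk

lemma T_ncard_le (h : QD r x y) [Fintype G] {g : G} (hg : g ∉ Subgroup.zpowers x) :
    ({k : G | g * k * g⁻¹ * k⁻¹ ∈ ({1, x ^ (2^r)} : Set G)}).ncard ≤ 8 := by
  have hsplit : {k : G | g * k * g⁻¹ * k⁻¹ ∈ ({1, x ^ (2^r)} : Set G)} =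
      {k : G | g * k * g⁻¹ * k⁻¹ = 1} ∪ {k : G | g * k * g⁻¹ * k⁻¹ = x ^ (2^r)} := by
    ext k; simp [Set.mem_insert_iff]
  rw [hsplit]
  have h1 := le_trans (h.fiber_ncard_le g 1) (h.cent_ncard_le hg)
  have h2 := le_trans (h.fiber_ncard_le g (x ^ (2^r))) (h.cent_ncard_le hg)
  have := Set.ncard_union_le {k : G | g * k * g⁻¹ * k⁻¹ = 1}
    {k : G | g * k * g⁻¹ * k⁻¹ = x ^ (2^r)}
  omega

lemma pair_comm (h : QD r x y) {w : G} (hw : w ∈ ({1, x ^ (2^r)} : Set G)) (a : G) :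
    a * w = w * a := by
  rcases hw with rfl | rfl
  · simp
  · exact h.zcomm a

lemma zpow_decomp (h : QD r x y) {g : G} (hg : g ∉ Subgroup.zpowers x) (j : ℤ) :
    ∃ w ∈ ({1, x ^ (2^r)} : Set G), g ^ j = w ∨ g ^ j = w * g := by
  have h2 : g ^ (2:ℤ) = g * g := by rw [zpow_two]
  rcases Int.even_or_odd j with ⟨s, hs⟩ | ⟨s, hs⟩
  · rcases h.gsq hg with h1 | h1
    · refine ⟨1, Set.mem_insert _ _, Or.inl ?_⟩
      rw [hs, show s + s = 2 * s by ring, zpow_mul, h2, h1, one_zpow]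
    · refine ⟨(x ^ (2^r) : G) ^ s, h.zmem_pair_zpow s, Or.inl ?_⟩
      rw [hs, show s + s = 2 * s by ring, zpow_mul, h2, h1]
  · rcases h.gsq hg with h1 | h1
    · refine ⟨1, Set.mem_insert _ _, Or.inr ?_⟩
      rw [hs, zpow_add, zpow_mul, h2, h1, one_zpow, zpow_one, one_mul]
    · refine ⟨(x ^ (2^r) : G) ^ s, h.zmem_pair_zpow s, Or.inr ?_⟩
      rw [hs, zpow_add, zpow_mul, h2, h1, zpow_one]

/-- The set of possible permuting partners outside `N` for a fixed `g`. -/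
lemma permute_mem_F (h : QD r x y) {g k : G} (hg : g ∉ Subgroup.zpowers x)
    (hk : k ∉ Subgroup.zpowers x)
    (hper : ((Subgroup.zpowers g : Set G) * (Subgroup.zpowers k : Set G)) =
      ((Subgroup.zpowers k : Set G) * (Subgroup.zpowers g : Set G))) :
    k ∈ ({g⁻¹, g⁻¹ * x ^ (2^r)} : Set G) ∪
      {k' : G | g * k' * g⁻¹ * k'⁻¹ ∈ ({1, x ^ (2^r)} : Set G)} := by
  have hmem : g * k ∈ ((Subgroup.zpowers g : Set G) * (Subgroup.zpowers k : Set G)) :=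
    Set.mul_mem_mul (Subgroup.mem_zpowers g) (Subgroup.mem_zpowers k)
  rw [hper] at hmem
  obtain ⟨u, hu, v, hv, huv⟩ := Set.mem_mul.1 hmem
  obtain ⟨i, hi⟩ := Subgroup.mem_zpowers_iff.1 hu
  obtain ⟨jj, hj⟩ := Subgroup.mem_zpowers_iff.1 hv
  obtain ⟨w₁, hw₁, hu'⟩ := h.zpow_decomp hk i
  obtain ⟨w₂, hw₂, hv'⟩ := h.zpow_decomp hg jj
  have hw : w₁ * w₂ ∈ ({1, x ^ (2^r)} : Set G) := h.pair_mul hw₁ hw₂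
  have hwN : w₁ * w₂ ∈ Subgroup.zpowers x := h.pair_subset_N hw
  rcases hu' with hu' | hu' <;> rcases hv' with hv' | hv'
  · -- g * k = w₁ * w₂ ∈ {1, z}
    left
    have hgk : g * k = w₁ * w₂ := by rw [← huv, ← hi, ← hj, hu', hv']
    have hk' : k = g⁻¹ * (w₁ * w₂) := by rw [← hgk]; group
    rcases hw with hw | hw
    · left; rw [hk', hw, mul_one]
    · right; rw [hk', hw]; exact rfl
  · -- g * k = w₁ * (w₂ * g)  ⇒ k ∈ N, contradiction
    exfalso
    have hgk : g * k = (w₁ * w₂) * g := by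
      rw [← huv, ← hi, ← hj, hu', hv']
      group
    have hk' : k = g⁻¹ * ((w₁ * w₂) * g) := by rw [← hgk]; group
    rw [← h.pair_comm hw g] at hk'
    have : k = w₁ * w₂ := by rw [hk']; group
    exact hk (this ▸ hwN)
  · -- g * k = (w₁ * k) * w₂ ⇒ g = w₁w₂, contradiction
    exfalso
    have hgk : g * k = (w₁ * w₂) * k := by
      rw [← huv, ← hi, ← hj, hu', hv']
      calc (w₁ * k) * w₂ = w₁ * (k * w₂) := by group
        _ = w₁ * (w₂ * k) := by rw [h.pair_comm hw₂ k]
        _ = (w₁ * w₂) * k := by group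
    have : g = w₁ * w₂ := mul_right_cancel hgk
    exact hg (this ▸ hwN)
  · -- g * k = (w₁ * k) * (w₂ * g) = w * (k * g)
    right
    have hgk : g * k = (w₁ * w₂) * (k * g) := by
      rw [← huv, ← hi, ← hj, hu', hv']
      calc (w₁ * k) * (w₂ * g) = w₁ * (k * w₂) * g := by group
        _ = w₁ * (w₂ * k) * g := by rw [h.pair_comm hw₂ k]
        _ = (w₁ * w₂) * (k * g) := by group
    have : g * k * g⁻¹ * k⁻¹ = w₁ * w₂ := by
      calc g * k * g⁻¹ * k⁻¹ = (g * k) * (k * g)⁻¹ := by group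
        _ = ((w₁ * w₂) * (k * g)) * (k * g)⁻¹ := by rw [← hgk]
        _ = w₁ * w₂ := by group
    show g * k * g⁻¹ * k⁻¹ ∈ ({1, x ^ (2^r)} : Set G)
    rw [this]
    exact hw

lemma F_ncard_le (h : QD r x y) [Fintype G] {g : G} (hg : g ∉ Subgroup.zpowers x) :
    (({g⁻¹, g⁻¹ * x ^ (2^r)} : Set G) ∪
      {k' : G | g * k' * g⁻¹ * k'⁻¹ ∈ ({1, x ^ (2^r)} : Set G)}).ncard ≤ 10 := by
  have h1 : ({g⁻¹, g⁻¹ * x ^ (2^r)} : Set G).ncard ≤ 2 := by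
    apply le_trans (Set.ncard_insert_le _ _)
    simp
  have h2 := h.T_ncard_le hg
  have := Set.ncard_union_le ({g⁻¹, g⁻¹ * x ^ (2^r)} : Set G)
    {k' : G | g * k' * g⁻¹ * k'⁻¹ ∈ ({1, x ^ (2^r)} : Set G)}
  omega

/-- A cyclic subgroup not contained in `N` is generated by any of its elements outside `N`. -/
lemma eq_zpowers_of_mem (h : QD r x y) {H : Subgroup G} (hcyc : IsCyclic ↥H)
    (hHN : ¬ H ≤ Subgroup.zpowers x) {g : G} (hgH : g ∈ H) (hg : g ∉ Subgroup.zpowers x) :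
    H = Subgroup.zpowers g := by
  obtain ⟨a, haH, rfl⟩ := _root_.exists_zpowers_eq H hcyc
  have haN : a ∉ Subgroup.zpowers x := fun hmm => hHN (zpowers_le.2 hmm)
  obtain ⟨j, hj⟩ := Subgroup.mem_zpowers_iff.1 hgH
  have h2 : a ^ (2:ℤ) = a * a := by rw [zpow_two]
  rcases Int.even_or_odd j with ⟨s, hs⟩ | ⟨s, hs⟩
  · exfalso
    apply hg
    rw [← hj, hs, show s + s = 2 * s by ring, zpow_mul, h2]
    exact Subgroup.zpow_mem _ (h.pair_subset_N (h.gsq haN)) s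
  · -- g = (a*a)^s * a
    have hga : g = (a * a) ^ s * a := by rw [← hj, hs, zpow_add, zpow_mul, h2, zpow_one]
    rcases h.gsq haN with h1 | h1
    · -- a² = 1, so g = a
      have : g = a := by
        rw [hga, h1, one_zpow, one_mul]
      rw [this]
    · -- a² = z
      rcases h.zmem_pair_zpow s with h3 | h3
      · have : g = a := by rw [hga, h1, h3, one_mul]
        rw [this]
      · -- g = z * a
        have hgza : g = x ^ (2^r) * a := by rw [hga, h1, h3]
        apply le_antisymm
        · rw [zpowers_le]
          -- a = g ^ 3
          have hzz : (x^(2^r) : G) * x^(2^r) = 1 := h.zsq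
          have hc : a * x^(2^r) = x^(2^r) * a := h.zcomm a
          have hggg : g * g * g = a := by
            rw [hgza]
            calc (x^(2^r) * a) * (x^(2^r) * a) * (x^(2^r) * a)
                = x^(2^r) * (a * x^(2^r)) * (a * x^(2^r)) * a := by group
              _ = x^(2^r) * (x^(2^r) * a) * (x^(2^r) * a) * a := by rw [hc]
              _ = (x^(2^r) * x^(2^r)) * (a * x^(2^r)) * (a * a) := by group
              _ = (x^(2^r) * x^(2^r)) * (x^(2^r) * a) * (a * a) := by rw [hc]
              _ = x^(2^r) * (a * (a * a)) := by rw [hzz]; group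
              _ = x^(2^r) * (a * x^(2^r)) := by rw [h1]
              _ = x^(2^r) * (x^(2^r) * a) := by rw [hc]
              _ = a := by rw [← mul_assoc, hzz, one_mul]
          exact Subgroup.mem_zpowers_iff.2 ⟨3, by
            rw [show (3:ℤ) = 1+1+1 by norm_num, zpow_add, zpow_add, zpow_one]
            exact hggg⟩
        · rw [zpowers_le]
          rw [hgza, ← h1]
          exact mul_mem (mul_mem haH haH) haH

lemma sq_formula (h : QD r x y) (a : ℤ) :
    (x ^ a * y) * (x ^ a * y) = x ^ ((2:ℤ)^r * a) := by
  have hc : y * x ^ a * y⁻¹ = x ^ (((2:ℤ)^r - 1) * a) := h.conj a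
  calc (x ^ a * y) * (x ^ a * y) = x ^ a * (y * x ^ a * y⁻¹) * (y * y) := by group
    _ = x ^ a * x ^ (((2:ℤ)^r - 1) * a) * 1 := by rw [hc, h.y2]
    _ = x ^ (a + ((2:ℤ)^r - 1) * a) := by rw [mul_one, ← zpow_add]
    _ = x ^ ((2:ℤ)^r * a) := by ring_nf

lemma xy_notmem (h : QD r x y) (a : ℤ) : x ^ a * y ∉ Subgroup.zpowers x := by
  intro hmm
  apply h.ynotmem
  have : y = x ^ (-a) * (x ^ a * y) := by group
  rw [this]
  exact mul_mem (Subgroup.mem_zpowers_iff.2 ⟨-a, rfl⟩) hmm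

/-- Lower bound on the number of cyclic subgroups. -/
lemma D_ge (h : QD r x y) [Fintype G] :
    2^r ≤ Nat.card {H : Subgroup G // IsCyclic ↥H} := by
  have hfin : Finite {H : Subgroup G // IsCyclic ↥H} := by
    have : Finite (Subgroup G) :=
      Finite.of_injective (fun H => (H : Set G)) SetLike.coe_injective
    exact Subtype.finite
  have key : Function.Injective (fun i : Fin (2^r) =>
      (⟨Subgroup.zpowers (x ^ ((2 * (i:ℕ) : ℕ) : ℤ) * y), _root_.isCyclic_zpowers _⟩ :
        {H : Subgroup G // IsCyclic ↥H})) := by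
    intro i j hij
    simp only [Subtype.mk.injEq] at hij
    -- properties of the generators
    have hsq : ∀ a : ℤ, (x ^ (2 * a) * y) * (x ^ (2 * a) * y) = 1 := by
      intro a
      rw [h.sq_formula (2 * a)]
      apply h.xpow_zpow_eq_one
      exact ⟨a, by ring⟩
    have hne : ∀ a : ℤ, x ^ a * y ≠ 1 := by
      intro a hmm
      exact h.xy_notmem a (hmm ▸ (Subgroup.zpowers x).one_mem)
    -- g j ∈ zpowers (g i)
    have hmem : x ^ ((2 * (j:ℕ) : ℕ) : ℤ) * y ∈
        Subgroup.zpowers (x ^ ((2 * (i:ℕ) : ℕ) : ℤ) * y) := by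
      rw [hij]; exact Subgroup.mem_zpowers _
    obtain ⟨k, hk⟩ := Subgroup.mem_zpowers_iff.1 hmem
    set gi := x ^ ((2 * (i:ℕ) : ℕ) : ℤ) * y with hgi
    set gj := x ^ ((2 * (j:ℕ) : ℕ) : ℤ) * y with hgj
    have hgi2 : gi * gi = 1 := by
      rw [hgi]
      have : ((2 * (i:ℕ) : ℕ) : ℤ) = 2 * ((i:ℕ) : ℤ) := by push_cast; ring
      rw [this]
      exact hsq _
    have hk2 : gi ^ (2:ℤ) = 1 := by rw [zpow_two]; exact hgi2
    have hgeq : gi = gj := by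
      rcases Int.even_or_odd k with ⟨s, hs⟩ | ⟨s, hs⟩
      · exfalso
        apply hne ((2 * (j:ℕ) : ℕ) : ℤ)
        rw [show (x ^ ((2 * (j:ℕ) : ℕ) : ℤ) * y) = gj from rfl, ← hk, hs,
          show s + s = 2 * s by ring, zpow_mul, hk2, one_zpow]
      · rw [← hk, hs, zpow_add, zpow_mul, hk2, one_zpow, zpow_one, one_mul]
    -- deduce i = j
    have hxx : x ^ ((2 * (i:ℕ) : ℕ) : ℤ) = x ^ ((2 * (j:ℕ) : ℕ) : ℤ) :=
      mul_right_cancel hgeq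
    have h1 : x ^ (((2 * (i:ℕ) : ℕ) : ℤ) - ((2 * (j:ℕ) : ℕ) : ℤ)) = 1 := by
      rw [zpow_sub, hxx, mul_inv_cancel]
    have hdvd := orderOf_dvd_iff_zpow_eq_one.2 h1
    rw [h.hx] at hdvd
    have hdvd2 : ((2:ℤ)^r) ∣ ((i:ℕ) : ℤ) - ((j:ℕ) : ℤ) := by
      have hc : (((2:ℕ)^(r+1) : ℕ) : ℤ) = 2 * ((2:ℤ)^r) := by push_cast; ring
      rw [hc] at hdvd
      have he : ((2 * (i:ℕ) : ℕ) : ℤ) - ((2 * (j:ℕ) : ℕ) : ℤ) =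
          2 * (((i:ℕ) : ℤ) - ((j:ℕ) : ℤ)) := by push_cast; ring
      rw [he] at hdvd
      exact (mul_dvd_mul_iff_left (by norm_num : (2:ℤ) ≠ 0)).1 hdvd
    have hz : ((i:ℕ) : ℤ) - ((j:ℕ) : ℤ) = 0 := by
      apply Int.eq_zero_of_abs_lt_dvd hdvd2
      have hi := i.2
      have hj := j.2
      rw [abs_lt]
      constructor <;> push_cast <;> [linarith [i.2, j.2]; linarith [i.2, j.2]]
    have : (i:ℕ) = (j:ℕ) := by omega
    exact Fin.ext this
  calc 2^r = Nat.card (Fin (2^r)) := by simp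
    _ ≤ _ := Nat.card_le_card_of_injective _ key

/-- Upper bound on number of cyclic subgroups inside `N`. -/
lemma chain_le (h : QD r x y) [Fintype G] :
    Nat.card {H : Subgroup G // IsCyclic ↥H ∧ H ≤ Subgroup.zpowers x} ≤ r + 2 := by
  classical
  haveI : IsCyclic ↥(Subgroup.zpowers x) := _root_.isCyclic_zpowers x
  haveI : Fintype ↥(Subgroup.zpowers x) := Fintype.ofFinite _
  have hcardN : Nat.card ↥(Subgroup.zpowers x) = 2^(r+1) := h.cardN
  have hfin : Finite (Subgroup ↥(Subgroup.zpowers x)) :=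
    Finite.of_injective (fun H => (H : Set ↥(Subgroup.zpowers x))) SetLike.coe_injective
  have step1 : Nat.card (Subgroup ↥(Subgroup.zpowers x)) ≤ r + 2 := by
    have hinj : Function.Injective (fun S : Subgroup ↥(Subgroup.zpowers x) =>
        (⟨(Nat.factorization (Nat.card S)) 2, by
          have hdvd := Subgroup.card_subgroup_dvd_card S
          rw [hcardN] at hdvd
          obtain ⟨k, hk, hck⟩ := (Nat.dvd_prime_pow Nat.prime_two).1 hdvd
          rw [hck, Nat.Prime.factorization_pow Nat.prime_two, Finsupp.single_eq_same]
          omega⟩ : Fin (r + 2))) := by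
      intro S T hST
      simp only [Fin.mk.injEq] at hST
      apply subgroup_eq_of_card_eq
      -- both cards are powers of two with equal exponent
      obtain ⟨k, hk, hck⟩ := (Nat.dvd_prime_pow Nat.prime_two).1
        (hcardN ▸ Subgroup.card_subgroup_dvd_card S)
      obtain ⟨l, hl, hcl⟩ := (Nat.dvd_prime_pow Nat.prime_two).1
        (hcardN ▸ Subgroup.card_subgroup_dvd_card T)
      rw [hck, hcl] at hST ⊢
      rw [Nat.Prime.factorization_pow Nat.prime_two, Nat.Prime.factorization_pow Nat.prime_two,
        Finsupp.single_eq_same, Finsupp.single_eq_same] at hST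
      rw [hST]
    calc Nat.card (Subgroup ↥(Subgroup.zpowers x)) ≤ Nat.card (Fin (r+2)) :=
          Nat.card_le_card_of_injective _ hinj
      _ = r + 2 := by simp
  have step2 : Function.Injective
      (fun H : {H : Subgroup G // IsCyclic ↥H ∧ H ≤ Subgroup.zpowers x} =>
        (H : Subgroup G).subgroupOf (Subgroup.zpowers x)) := by
    intro H K hHK
    have h1 := congrArg (fun S : Subgroup ↥(Subgroup.zpowers x) =>
      S.map (Subgroup.zpowers x).subtype) hHK
    simp only [Subgroup.subgroupOf_map_subtype] at h1
    rw [inf_eq_left.2 H.2.2, inf_eq_left.2 K.2.2] at h1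
    exact Subtype.ext h1
  calc Nat.card {H : Subgroup G // IsCyclic ↥H ∧ H ≤ Subgroup.zpowers x}
      ≤ Nat.card (Subgroup ↥(Subgroup.zpowers x)) := Nat.card_le_card_of_injective _ step2
    _ ≤ r + 2 := step1

lemma numerator_le (h : QD r x y) [Fintype G] :
    Nat.card {pr : Subgroup G × Subgroup G //
      IsCyclic ↥pr.1 ∧ IsCyclic ↥pr.2 ∧
      (pr.1 : Set G) * (pr.2 : Set G) = (pr.2 : Set G) * (pr.1 : Set G)}
    ≤ 2 * (r + 2) * Nat.card {H : Subgroup G // IsCyclic ↥H} + 40 * 2^r := by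
  classical
  set N := Subgroup.zpowers x with hN
  set S1 : Set (Subgroup G) := {H | IsCyclic ↥H ∧ H ≤ N} with hS1
  set S2 : Set (Subgroup G) := {H | IsCyclic ↥H} with hS2
  set Sall : Set (Subgroup G × Subgroup G) := {pr | IsCyclic ↥pr.1 ∧ IsCyclic ↥pr.2 ∧
      (pr.1 : Set G) * (pr.2 : Set G) = (pr.2 : Set G) * (pr.1 : Set G)} with hSall
  set C : Set (Subgroup G × Subgroup G) := {pr | IsCyclic ↥pr.1 ∧ IsCyclic ↥pr.2 ∧
      (pr.1 : Set G) * (pr.2 : Set G) = (pr.2 : Set G) * (pr.1 : Set G) ∧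
      ¬ pr.1 ≤ N ∧ ¬ pr.2 ≤ N} with hC
  have hsub : Sall ⊆ (S1 ×ˢ S2 ∪ S2 ×ˢ S1) ∪ C := by
    rintro pr ⟨h1, h2, h3⟩
    by_cases hle1 : pr.1 ≤ N
    · exact Or.inl (Or.inl ⟨⟨h1, hle1⟩, h2⟩)
    by_cases hle2 : pr.2 ≤ N
    · exact Or.inl (Or.inr ⟨h1, h2, hle2⟩)
    · exact Or.inr ⟨h1, h2, h3, hle1, hle2⟩
  -- cardinalities
  have hcard1 : Nat.card {pr : Subgroup G × Subgroup G //
      IsCyclic ↥pr.1 ∧ IsCyclic ↥pr.2 ∧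
      (pr.1 : Set G) * (pr.2 : Set G) = (pr.2 : Set G) * (pr.1 : Set G)} = Sall.ncard :=
    Nat.card_coe_set_eq Sall
  have hfinsub : Finite (Subgroup G) :=
    Finite.of_injective (fun H => (H : Set G)) SetLike.coe_injective
  have hprod1 : (S1 ×ˢ S2).ncard = S1.ncard * S2.ncard := by
    rw [← Nat.card_coe_set_eq, ← Nat.card_coe_set_eq, ← Nat.card_coe_set_eq,
      Nat.card_congr (Equiv.Set.prod S1 S2), Nat.card_prod]
  have hprod2 : (S2 ×ˢ S1).ncard = S2.ncard * S1.ncard := by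
    rw [← Nat.card_coe_set_eq, ← Nat.card_coe_set_eq, ← Nat.card_coe_set_eq,
      Nat.card_congr (Equiv.Set.prod S2 S1), Nat.card_prod]
  have hS1le : S1.ncard ≤ r + 2 := by
    rw [← Nat.card_coe_set_eq]
    exact h.chain_le
  have hS2eq : S2.ncard = Nat.card {H : Subgroup G // IsCyclic ↥H} :=
    (Nat.card_coe_set_eq S2).symm
  -- bound on C
  set R : Set (G × G) := {p | p.1 ∉ N ∧ p.2 ∉ N ∧
      ((Subgroup.zpowers p.1 : Set G) * (Subgroup.zpowers p.2 : Set G)) =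
      ((Subgroup.zpowers p.2 : Set G) * (Subgroup.zpowers p.1 : Set G))} with hR
  have hCR : C.ncard ≤ R.ncard := by
    apply Set.ncard_le_ncard_of_injOn (fun pr =>
      ((if h1 : ∃ g, g ∈ pr.1 ∧ g ∉ N then h1.choose else 1),
       (if h2 : ∃ g, g ∈ pr.2 ∧ g ∉ N then h2.choose else 1)))
    · rintro pr ⟨hc1, hc2, hper, hle1, hle2⟩
      obtain ⟨g1, hg1H, hg1N⟩ := SetLike.not_le_iff_exists.1 hle1
      obtain ⟨g2, hg2H, hg2N⟩ := SetLike.not_le_iff_exists.1 hle2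
      have he1 : ∃ g, g ∈ pr.1 ∧ g ∉ N := ⟨g1, hg1H, hg1N⟩
      have he2 : ∃ g, g ∈ pr.2 ∧ g ∉ N := ⟨g2, hg2H, hg2N⟩
      simp only [dif_pos he1, dif_pos he2]
      have hz1 : pr.1 = Subgroup.zpowers he1.choose :=
        h.eq_zpowers_of_mem hc1 hle1 he1.choose_spec.1 he1.choose_spec.2
      have hz2 : pr.2 = Subgroup.zpowers he2.choose :=
        h.eq_zpowers_of_mem hc2 hle2 he2.choose_spec.1 he2.choose_spec.2
      refine ⟨he1.choose_spec.2, he2.choose_spec.2, ?_⟩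
      rw [← hz1, ← hz2]
      exact hper
    · rintro pr hpr pr' hpr' heq
      obtain ⟨hc1, hc2, hper, hle1, hle2⟩ := hpr
      obtain ⟨hc1', hc2', hper', hle1', hle2'⟩ := hpr'
      have he1 : ∃ g, g ∈ pr.1 ∧ g ∉ N := SetLike.not_le_iff_exists.1 hle1
      have he2 : ∃ g, g ∈ pr.2 ∧ g ∉ N := SetLike.not_le_iff_exists.1 hle2
      have he1' : ∃ g, g ∈ pr'.1 ∧ g ∉ N := SetLike.not_le_iff_exists.1 hle1'
      have he2' : ∃ g, g ∈ pr'.2 ∧ g ∉ N := SetLike.not_le_iff_exists.1 hle2'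
      simp only [dif_pos he1, dif_pos he2, dif_pos he1', dif_pos he2', Prod.mk.injEq] at heq
      have hz1 : pr.1 = Subgroup.zpowers he1.choose :=
        h.eq_zpowers_of_mem hc1 hle1 he1.choose_spec.1 he1.choose_spec.2
      have hz2 : pr.2 = Subgroup.zpowers he2.choose :=
        h.eq_zpowers_of_mem hc2 hle2 he2.choose_spec.1 he2.choose_spec.2
      have hz1' : pr'.1 = Subgroup.zpowers he1'.choose :=
        h.eq_zpowers_of_mem hc1' hle1' he1'.choose_spec.1 he1'.choose_spec.2
      have hz2' : pr'.2 = Subgroup.zpowers he2'.choose :=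
        h.eq_zpowers_of_mem hc2' hle2' he2'.choose_spec.1 he2'.choose_spec.2
      have : pr.1 = pr'.1 := by rw [hz1, hz1', heq.1]
      have h2 : pr.2 = pr'.2 := by rw [hz2, hz2', heq.2]
      exact Prod.ext this h2
  have hRcard : R.ncard ≤ Fintype.card G * 10 := by
    apply ncard_le_of_fibers
    intro g
    by_cases hg : g ∈ N
    · have : {b : G | (g, b) ∈ R} = ∅ := by
        ext b; simp only [Set.mem_setOf_eq, Set.mem_empty_iff_false, iff_false]
        rintro ⟨hgN, -, -⟩
        exact hgN hg
      rw [this]; simp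
    · have hsubF : {b : G | (g, b) ∈ R} ⊆ ({g⁻¹, g⁻¹ * x ^ (2^r)} : Set G) ∪
          {k' : G | g * k' * g⁻¹ * k'⁻¹ ∈ ({1, x ^ (2^r)} : Set G)} := by
        rintro k ⟨-, hkN, hper⟩
        exact h.permute_mem_F hg hkN hper
      exact le_trans (Set.ncard_le_ncard hsubF (Set.toFinite _)) (h.F_ncard_le hg)
  have hG4 : Fintype.card G = 2^(r+2) := by
    rw [← Nat.card_eq_fintype_card, h.hcard]
  have hR40 : R.ncard ≤ 40 * 2^r := by
    rw [hG4] at hRcard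
    calc R.ncard ≤ 2^(r+2) * 10 := hRcard
      _ = 40 * 2^r := by ring
  -- combine
  rw [hcard1]
  calc Sall.ncard ≤ ((S1 ×ˢ S2 ∪ S2 ×ˢ S1) ∪ C).ncard :=
        Set.ncard_le_ncard hsub (Set.toFinite _)
    _ ≤ (S1 ×ˢ S2 ∪ S2 ×ˢ S1).ncard + C.ncard := Set.ncard_union_le _ _
    _ ≤ ((S1 ×ˢ S2).ncard + (S2 ×ˢ S1).ncard) + C.ncard := by
        have := Set.ncard_union_le (S1 ×ˢ S2) (S2 ×ˢ S1)
        omega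
    _ ≤ ((r+2) * Nat.card {H : Subgroup G // IsCyclic ↥H} +
          Nat.card {H : Subgroup G // IsCyclic ↥H} * (r+2)) + 40 * 2^r := by
        have hb1 : (S1 ×ˢ S2).ncard ≤ (r+2) * Nat.card {H : Subgroup G // IsCyclic ↥H} := by
          rw [hprod1, hS2eq]
          exact Nat.mul_le_mul_right _ hS1le
        have hb2 : (S2 ×ˢ S1).ncard ≤ Nat.card {H : Subgroup G // IsCyclic ↥H} * (r+2) := by
          rw [hprod2, hS2eq]
          exact Nat.mul_le_mul_left _ hS1le
        have hb3 := le_trans hCR hR40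
        omega
    _ = 2 * (r + 2) * Nat.card {H : Subgroup G // IsCyclic ↥H} + 40 * 2^r := by ring

lemma csd_le (h : QD r x y) [Fintype G] :
    csd G ≤ ((2 * (r + 2) + 40 : ℕ) : ℚ) / ((2:ℚ)^r) := by
  have hD := h.D_ge
  have hP := h.numerator_le
  set P := Nat.card {pr : Subgroup G × Subgroup G //
      IsCyclic ↥pr.1 ∧ IsCyclic ↥pr.2 ∧
      (pr.1 : Set G) * (pr.2 : Set G) = (pr.2 : Set G) * (pr.1 : Set G)} with hPdef
  set D := Nat.card {H : Subgroup G // IsCyclic ↥H} with hDdef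
  have hP2 : P ≤ (2 * (r + 2) + 40) * D := by
    have h40 : 40 * 2^r ≤ 40 * D := Nat.mul_le_mul_left _ hD
    calc P ≤ 2 * (r + 2) * D + 40 * 2^r := hP
      _ ≤ 2 * (r + 2) * D + 40 * D := by omega
      _ = (2 * (r + 2) + 40) * D := by ring
  have hD0 : (0:ℚ) < (D:ℚ) := by
    have : 0 < D := lt_of_lt_of_le (by positivity) hD
    exact_mod_cast this
  have hDr : ((2:ℚ)^r) ≤ (D:ℚ) := by exact_mod_cast hD
  rw [csd]
  rw [div_le_div_iff₀ (by positivity) (by positivity)]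
  have hPQ : (P:ℚ) ≤ ((2 * (r + 2) + 40 : ℕ) : ℚ) * (D:ℚ) := by exact_mod_cast hP2
  calc (P:ℚ) * (2:ℚ)^r ≤ (((2 * (r + 2) + 40 : ℕ) : ℚ) * (D:ℚ)) * (D:ℚ) := by
        apply mul_le_mul hPQ hDr (by positivity)
        positivity
    _ = ((2 * (r + 2) + 40 : ℕ) : ℚ) * (D:ℚ)^2 := by ring

end QD


lemma csd_nonneg (G : Type*) [Group G] : 0 ≤ csd G := by
  rw [csd]
  positivity

theorem stmt_14 (G : ℕ → Type*) [∀ n, Group (G n)] [∀ n, Fintype (G n)]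
    (hG : ∀ n, 4 ≤ n → ∃ x y : G n, orderOf x = 2 ^ (n - 1) ∧ orderOf y = 2 ∧
      y⁻¹ * x * y = x ^ (2 ^ (n - 2) - 1) ∧
      Subgroup.zpowers x ⊔ Subgroup.zpowers y = ⊤ ∧ Nat.card (G n) = 2 ^ n) :
    Filter.Tendsto (fun n => (csd (G n) : ℝ)) Filter.atTop (nhds 0) := by
  have key : ∀ n, 4 ≤ n → (csd (G n) : ℝ) ≤ (2 * (n:ℝ) + 40) / 2^(n-2) := by
    intro n hn
    obtain ⟨x, y, hx, hy, hrel, hsup, hcard⟩ := hG n hn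
    have hq : QD (n-2) x y :=
      ⟨by omega, by rw [hx]; congr 1; omega, hy, hrel, hsup, by rw [hcard]; congr 1; omega⟩
    have hb := hq.csd_le
    have hn2 : n - 2 + 2 = n := by omega
    rw [hn2] at hb
    have hbR : ((csd (G n) : ℚ) : ℝ) ≤ (((2 * n + 40 : ℕ) : ℚ) : ℝ) / (((2:ℚ)^(n-2) : ℚ) : ℝ) := by
      rw [← Rat.cast_div]
      exact Rat.cast_le.2 hb
    calc (csd (G n) : ℝ) ≤ (((2 * n + 40 : ℕ) : ℚ) : ℝ) / (((2:ℚ)^(n-2) : ℚ) : ℝ) := hbR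
      _ = (2 * (n:ℝ) + 40) / 2^(n-2) := by push_cast; ring
  -- the bounding sequence tends to zero
  have t1 : Filter.Tendsto (fun m : ℕ => (m:ℝ) * (1/2:ℝ)^m) Filter.atTop (nhds 0) := by
    have hs := summable_pow_mul_geometric_of_norm_lt_one (R := ℝ) 1
      (r := (1/2:ℝ)) (by rw [Real.norm_eq_abs]; rw [abs_of_pos] <;> norm_num)
    have := hs.tendsto_atTop_zero
    simpa using this
  have t2 : Filter.Tendsto (fun m : ℕ => (1/2:ℝ)^m) Filter.atTop (nhds 0) := by
    apply tendsto_pow_atTop_nhds_zero_of_norm_lt_one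
    rw [Real.norm_eq_abs, abs_of_pos] <;> norm_num
  have h0 : Filter.Tendsto (fun m : ℕ => (2 * ((m:ℝ) + 2) + 40) * (1/2:ℝ)^m)
      Filter.atTop (nhds 0) := by
    have h' := ((t1.const_mul (2:ℝ)).add (t2.const_mul (44:ℝ)))
    have h'' : (2:ℝ) * 0 + 44 * 0 = 0 := by norm_num
    rw [h''] at h'
    apply h'.congr
    intro m
    ring
  have hcomp : Filter.Tendsto (fun n : ℕ => (2 * (((n-2 : ℕ)):ℝ) + 44) * (1/2:ℝ)^(n-2))
      Filter.atTop (nhds 0) := by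
    have hsub : Filter.Tendsto (fun n : ℕ => n - 2) Filter.atTop Filter.atTop :=
      Filter.tendsto_sub_atTop_nat 2
    have := h0.comp hsub
    apply this.congr
    intro n
    simp only [Function.comp_apply]
    ring
  have hEq : (fun n : ℕ => (2 * (n:ℝ) + 40) / 2^(n-2)) =ᶠ[Filter.atTop]
      (fun n : ℕ => (2 * (((n-2 : ℕ)):ℝ) + 44) * (1/2:ℝ)^(n-2)) := by
    filter_upwards [Filter.eventually_ge_atTop 2] with n hn
    have hcast : (((n-2 : ℕ)):ℝ) = (n:ℝ) - 2 := by
      push_cast [Nat.cast_sub hn]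
      ring
    rw [hcast]
    rw [div_eq_mul_inv, ← inv_pow]
    norm_num
    ring
  have hbound : Filter.Tendsto (fun n : ℕ => (2 * (n:ℝ) + 40) / 2^(n-2))
      Filter.atTop (nhds 0) := by
    exact Filter.Tendsto.congr' hEq.symm hcomp
  apply squeeze_zero' (Filter.Eventually.of_forall (fun n => by
    exact_mod_cast csd_nonneg (G n)))
    ?_ hbound
  filter_upwards [Filter.eventually_ge_atTop 4] with n hn
  exact key n hn
end

section
/- For n ≥ 2, the group ℤ_{2^n} × Q₈ (direct product of the cyclic group of order 2^n with the quaternion group of order 8) has exactly 8n + 2 cyclic subgroups, i.e. |L₁(ℤ_{2^n} × Q₈)| = 8n + 2. -/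
open Pointwise

lemma mem_div4 {a : ℕ} (h : a ∣ 4) : a = 1 ∨ a = 2 ∨ a = 4 := by
  have h4 : a ≤ 4 := Nat.le_of_dvd (by norm_num) h
  interval_cases a <;> revert h <;> decide

lemma my_lcm2 (a b : ℕ) : Nat.lcm a b = 2 ↔ (a = 2 ∧ b ∣ 2) ∨ (a = 1 ∧ b = 2) := by
  constructor
  · intro h
    have ha : a ∣ 2 := h ▸ Nat.dvd_lcm_left a b
    have hb : b ∣ 2 := h ▸ Nat.dvd_lcm_right a b
    have ha' := (Nat.le_of_dvd (by norm_num) ha)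
    have hb' := (Nat.le_of_dvd (by norm_num) hb)
    interval_cases a <;> interval_cases b <;> revert ha hb h <;> decide
  · rintro (⟨rfl, hb⟩ | ⟨rfl, rfl⟩)
    · have hb' := Nat.le_of_dvd (by norm_num) hb
      interval_cases b <;> revert hb <;> decide
    · decide

lemma my_lcm4 (a b : ℕ) : Nat.lcm a b = 4 ↔ (a = 4 ∧ b ∣ 4) ∨ (a ∣ 2 ∧ b = 4) := by
  constructor
  · intro h
    have ha : a ∣ 4 := h ▸ Nat.dvd_lcm_left a b
    have hb : b ∣ 4 := h ▸ Nat.dvd_lcm_right a b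
    have ha' := (Nat.le_of_dvd (by norm_num) ha)
    have hb' := (Nat.le_of_dvd (by norm_num) hb)
    interval_cases a <;> interval_cases b <;> revert ha hb h <;> decide
  · rintro (⟨rfl, hb⟩ | ⟨ha, rfl⟩)
    · rcases mem_div4 hb with rfl | rfl | rfl <;> decide
    · have ha' := Nat.le_of_dvd (by norm_num) ha
      interval_cases a <;> revert ha <;> decide

lemma my_lcm_big {a b k : ℕ} (hb : b ∣ 4) (hk : 3 ≤ k) (ha : ∃ j, a = 2 ^ j) :
    Nat.lcm a b = 2 ^ k ↔ a = 2 ^ k := by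
  obtain ⟨j, rfl⟩ := ha
  constructor
  · intro h
    rcases le_or_gt j 2 with hj | hj
    · exfalso
      have h1 : Nat.lcm (2 ^ j) b ∣ 4 :=
        Nat.lcm_dvd ((pow_dvd_pow 2 hj).trans (by norm_num)) hb
      rw [h] at h1
      have := Nat.le_of_dvd (by norm_num) h1
      have : (2 : ℕ) ^ 3 ≤ 2 ^ k := Nat.pow_le_pow_right (by norm_num) hk
      omega
    · have h4 : (4 : ℕ) ∣ 2 ^ j := by
        calc (4 : ℕ) = 2 ^ 2 := by norm_num
        _ ∣ 2 ^ j := pow_dvd_pow 2 (by omega)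
      rw [← h]
      exact (Nat.dvd_antisymm (Nat.lcm_dvd dvd_rfl (hb.trans h4)) (Nat.dvd_lcm_left _ _)).symm
  · intro h
    rw [h]
    exact Nat.dvd_antisymm
      (Nat.lcm_dvd dvd_rfl (hb.trans ((by norm_num : (4:ℕ) = 2^2) ▸ pow_dvd_pow 2 (by omega))))
      (Nat.dvd_lcm_left _ _)
open QuaternionGroup Finset

lemma B_univ : (Finset.univ : Finset (QuaternionGroup 2)) =
    {a 0, a 1, a 2, a 3, xa 0, xa 1, xa 2, xa 3} := by decide

lemma oB_a0 : orderOf (a 0 : QuaternionGroup 2) = 1 := by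
  rw [QuaternionGroup.orderOf_a]; decide
lemma oB_a1 : orderOf (a 1 : QuaternionGroup 2) = 4 := by
  rw [QuaternionGroup.orderOf_a]; decide
lemma oB_a2 : orderOf (a 2 : QuaternionGroup 2) = 2 := by
  rw [QuaternionGroup.orderOf_a]; decide
lemma oB_a3 : orderOf (a 3 : QuaternionGroup 2) = 4 := by
  rw [QuaternionGroup.orderOf_a]; decide
lemma oB_xa (i : ZMod (2*2)) : orderOf (xa i : QuaternionGroup 2) = 4 :=
  QuaternionGroup.orderOf_xa i

lemma oB_dvd (y : QuaternionGroup 2) : orderOf y ∣ 4 := by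
  rcases y with i | i
  · rw [QuaternionGroup.orderOf_a]
    exact Nat.div_dvd_of_dvd (Nat.gcd_dvd_left _ _)
  · rw [QuaternionGroup.orderOf_xa]
open Finset

section A
variable (n : ℕ)

instance myNeZero : NeZero (2 ^ n) := ⟨pow_ne_zero n two_ne_zero⟩

lemma A_card : Fintype.card (Multiplicative (ZMod (2 ^ n))) = 2 ^ n := by
  rw [Fintype.card_multiplicative, ZMod.card]

lemma A_count_eq {j : ℕ} (hj : j ≤ n) :
    (univ.filter fun x : Multiplicative (ZMod (2 ^ n)) => orderOf x = 2 ^ j).card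
      = Nat.totient (2 ^ j) :=
  IsCyclic.card_orderOf_eq_totient (by rw [A_card]; exact pow_dvd_pow 2 hj)

lemma A_orderOf_pow (x : Multiplicative (ZMod (2 ^ n))) : ∃ j ≤ n, orderOf x = 2 ^ j := by
  have h : orderOf x ∣ 2 ^ n := by
    have h0 := orderOf_dvd_card (x := x); rwa [A_card] at h0
  obtain ⟨j, hj, hx⟩ := (Nat.dvd_prime_pow Nat.prime_two).mp h
  exact ⟨j, hj, hx⟩

lemma A_count_dvd : ∀ j ≤ n,
    (univ.filter fun x : Multiplicative (ZMod (2 ^ n)) => orderOf x ∣ 2 ^ j).card = 2 ^ j := by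
  intro j
  induction j with
  | zero =>
    intro _
    have h : (univ.filter fun x : Multiplicative (ZMod (2 ^ n)) => orderOf x ∣ 2 ^ 0)
        = univ.filter fun x : Multiplicative (ZMod (2 ^ n)) => orderOf x = 2 ^ 0 := by
      ext x; simp [Nat.dvd_one]
    rw [h, A_count_eq n (Nat.zero_le n), pow_zero, Nat.totient_one]
  | succ j IH =>
    intro hj
    have hsplit : (univ.filter fun x : Multiplicative (ZMod (2 ^ n)) => orderOf x ∣ 2 ^ (j + 1))
        = (univ.filter fun x : Multiplicative (ZMod (2 ^ n)) => orderOf x ∣ 2 ^ j)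
          ∪ (univ.filter fun x : Multiplicative (ZMod (2 ^ n)) => orderOf x = 2 ^ (j + 1)) := by
      ext x
      simp only [mem_filter, mem_union, mem_univ, true_and]
      constructor
      · intro h
        obtain ⟨a, ha, hx⟩ := (Nat.dvd_prime_pow Nat.prime_two).mp h
        rcases Nat.lt_or_ge a (j + 1) with h' | h'
        · exact Or.inl (hx ▸ pow_dvd_pow 2 (Nat.lt_succ_iff.mp h'))
        · exact Or.inr (by rw [hx, Nat.le_antisymm ha h'])
      · rintro (h | h)
        · exact h.trans (pow_dvd_pow 2 (Nat.le_succ j))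
        · exact h ▸ dvd_rfl
    have hdisj : Disjoint
        (univ.filter fun x : Multiplicative (ZMod (2 ^ n)) => orderOf x ∣ 2 ^ j)
        (univ.filter fun x : Multiplicative (ZMod (2 ^ n)) => orderOf x = 2 ^ (j + 1)) := by
      rw [Finset.disjoint_left]
      intro x hx1 hx2
      have h1 := (mem_filter.mp hx1).2
      have h2 := (mem_filter.mp hx2).2
      rw [h2] at h1
      have h3 := Nat.le_of_dvd (pow_pos (by norm_num) j) h1
      have h4 : (2 : ℕ) ^ j < 2 ^ (j + 1) := Nat.pow_lt_pow_succ (by norm_num)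
      omega
    rw [hsplit, Finset.card_union_of_disjoint hdisj, IH (by omega), A_count_eq n hj,
      Nat.totient_prime_pow Nat.prime_two (Nat.succ_pos j)]
    simp [pow_succ]
    ring
end A
open Finset Subgroup

variable {G : Type*} [Group G] [Fintype G] [DecidableEq (Subgroup G)]
set_option linter.unusedSectionVars false

lemma my_isCyclic_zpowers (g : G) : IsCyclic (zpowers g) := by
  refine ⟨⟨⟨g, mem_zpowers g⟩, fun x => ?_⟩⟩
  obtain ⟨y, ⟨k, hk⟩⟩ := x
  exact ⟨k, Subtype.ext (by simp [← hk])⟩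

lemma my_isCyclic_iff (H : Subgroup G) : IsCyclic ↥H ↔ ∃ g : G, zpowers g = H := by
  constructor
  · intro h
    obtain ⟨g, hg⟩ := h.exists_generator
    refine ⟨g, le_antisymm (zpowers_le.mpr g.2) fun x hx => ?_⟩
    obtain ⟨k, hk⟩ := hg ⟨x, hx⟩
    exact ⟨k, by simpa using congrArg Subtype.val hk⟩
  · rintro ⟨g, rfl⟩; exact my_isCyclic_zpowers g

lemma my_card_cyclic :
    Nat.card {H : Subgroup G // IsCyclic ↥H}
      = (univ.image fun g : G => zpowers g).card := by
  classical
  rw [← Nat.card_eq_finsetCard]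
  refine Nat.card_congr (Equiv.subtypeEquivRight fun H => ?_)
  simp [my_isCyclic_iff, eq_comm]

lemma my_orderOf_coe {H : Subgroup G} (x : ↥H) : orderOf (x : G) = orderOf x :=
  orderOf_injective H.subtype H.subtype_injective x

lemma my_key (d : ℕ) :
    ((univ.image fun g : G => zpowers g).filter fun H : Subgroup G => Nat.card ↥H = d).card * d.totient
      = (univ.filter fun g : G => orderOf g = d).card := by
  classical
  set t := (univ.image fun g : G => zpowers g).filter fun H : Subgroup G => Nat.card ↥H = d with ht
  have hmem : ∀ g ∈ univ.filter fun g : G => orderOf g = d, zpowers g ∈ t := by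
    intro g hg
    simp only [mem_filter, mem_univ, true_and] at hg
    exact mem_filter.mpr ⟨mem_image_of_mem _ (mem_univ g), by rw [Nat.card_zpowers, hg]⟩
  have h2 : ∀ H ∈ t,
      ((univ.filter fun g : G => orderOf g = d).filter fun g : G => zpowers g = H).card
        = d.totient := by
    intro H hH
    simp only [ht, mem_filter, mem_image, mem_univ, true_and] at hH
    obtain ⟨⟨g0, hg0⟩, hcard⟩ := hH
    haveI : IsCyclic ↥H := hg0 ▸ my_isCyclic_zpowers g0
    have hdvd : d ∣ Fintype.card ↥H := by
      rw [← Nat.card_eq_fintype_card, hcard]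
    rw [← IsCyclic.card_orderOf_eq_totient (α := ↥H) hdvd]
    refine Finset.card_bij (fun g hg => ⟨g, ?_⟩) ?_ ?_ ?_
    · have := (mem_filter.mp hg).2
      exact this ▸ mem_zpowers g
    · intro g hg
      simp only [mem_filter, mem_univ, true_and] at hg ⊢
      rw [← my_orderOf_coe]
      exact hg.1
    · intro a ha b hb h
      exact congrArg Subtype.val h
    · intro x hx
      simp only [mem_filter, mem_univ, true_and] at hx
      have hord : orderOf (x : G) = d := by
        rw [my_orderOf_coe]; exact hx
      have hzp : zpowers (x : G) = H := by
        refine Subgroup.eq_of_le_of_card_ge (zpowers_le.mpr x.2) ?_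
        rw [hcard, Nat.card_zpowers, hord]
      exact ⟨(x : G), mem_filter.mpr ⟨mem_filter.mpr ⟨mem_univ _, hord⟩, hzp⟩, rfl⟩
  rw [Finset.card_eq_sum_card_fiberwise hmem, Finset.sum_congr rfl h2, Finset.sum_const,
    smul_eq_mul]

lemma my_total :
    (univ.image fun g : G => zpowers g).card
      = ∑ d ∈ (Fintype.card G).divisors,
          ((univ.image fun g : G => zpowers g).filter fun H : Subgroup G => Nat.card ↥H = d).card := by
  classical
  refine Finset.card_eq_sum_card_fiberwise fun H _ => ?_
  rw [Finset.mem_coe, Nat.mem_divisors]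
  have h1 : Nat.card ↥H ∣ Fintype.card G := by
    rw [← Nat.card_eq_fintype_card]; exact H.card_subgroup_dvd_card
  exact ⟨h1, Fintype.card_ne_zero⟩
section Bfilt
open QuaternionGroup Finset

lemma B_card8 : (Finset.univ : Finset (QuaternionGroup 2)).card = 8 := by
  rw [B_univ]; decide

lemma B_filt_dvd2 : (univ.filter fun y : QuaternionGroup 2 => orderOf y ∣ 2) = {a 0, a 2} := by
  ext y
  simp only [mem_filter, mem_univ, true_and, mem_insert, mem_singleton]
  rcases y with i | i
  · rw [QuaternionGroup.orderOf_a]; revert i; decide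
  · rw [QuaternionGroup.orderOf_xa]; revert i; decide

lemma B_filt_eq2 : (univ.filter fun y : QuaternionGroup 2 => orderOf y = 2) = {a 2} := by
  ext y
  simp only [mem_filter, mem_univ, true_and, mem_singleton]
  rcases y with i | i
  · rw [QuaternionGroup.orderOf_a]; revert i; decide
  · rw [QuaternionGroup.orderOf_xa]; revert i; decide

lemma B_filt_eq4 : (univ.filter fun y : QuaternionGroup 2 => orderOf y = 4)
    = {a 1, a 3, xa 0, xa 1, xa 2, xa 3} := by
  ext y
  simp only [mem_filter, mem_univ, true_and, mem_insert, mem_singleton]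
  rcases y with i | i
  · rw [QuaternionGroup.orderOf_a]; revert i; decide
  · rw [QuaternionGroup.orderOf_xa]; revert i; decide

lemma B_filt_dvd4 : (univ.filter fun y : QuaternionGroup 2 => orderOf y ∣ 4) = univ :=
  Finset.filter_true_of_mem fun y _ => oB_dvd y
end Bfilt

section Nsec
open Finset
variable (n : ℕ)

lemma A_filt_one : (univ.filter fun x : Multiplicative (ZMod (2 ^ n)) => orderOf x = 1).card
    = 1 := by
  have h : (univ.filter fun x : Multiplicative (ZMod (2 ^ n)) => orderOf x = 1) = {1} := by
    ext x; simp [orderOf_eq_one_iff]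
  rw [h, card_singleton]

lemma N_one :
    (univ.filter fun p : Multiplicative (ZMod (2 ^ n)) × QuaternionGroup 2 => orderOf p = 1).card
      = 1 := by
  have h : (univ.filter
      fun p : Multiplicative (ZMod (2 ^ n)) × QuaternionGroup 2 => orderOf p = 1) = {1} := by
    ext p; simp [orderOf_eq_one_iff]
  rw [h, card_singleton]

lemma N_two (hn : 2 ≤ n) :
    (univ.filter fun p : Multiplicative (ZMod (2 ^ n)) × QuaternionGroup 2 => orderOf p = 2).card
      = 3 := by
  classical
  have hsplit : (univ.filter
        fun p : Multiplicative (ZMod (2 ^ n)) × QuaternionGroup 2 => orderOf p = 2)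
      = ((univ.filter fun x : Multiplicative (ZMod (2 ^ n)) => orderOf x = 2 ^ 1) ×ˢ
          (univ.filter fun y : QuaternionGroup 2 => orderOf y ∣ 2))
        ∪ ((univ.filter fun x : Multiplicative (ZMod (2 ^ n)) => orderOf x = 1) ×ˢ
          (univ.filter fun y : QuaternionGroup 2 => orderOf y = 2)) := by
    ext p
    simp only [mem_filter, mem_union, mem_product, mem_univ, true_and, Prod.orderOf, pow_one]
    exact my_lcm2 _ _
  have hd : Disjoint
      ((univ.filter fun x : Multiplicative (ZMod (2 ^ n)) => orderOf x = 2 ^ 1) ×ˢ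
        (univ.filter fun y : QuaternionGroup 2 => orderOf y ∣ 2))
      ((univ.filter fun x : Multiplicative (ZMod (2 ^ n)) => orderOf x = 1) ×ˢ
        (univ.filter fun y : QuaternionGroup 2 => orderOf y = 2)) := by
    rw [Finset.disjoint_left]
    intro p hp1 hp2
    have h1 := (mem_filter.mp (mem_product.mp hp1).1).2
    have h2 := (mem_filter.mp (mem_product.mp hp2).1).2
    rw [h2] at h1
    norm_num at h1
  have hA2 : (univ.filter fun x : Multiplicative (ZMod (2 ^ n)) => orderOf x = 2 ^ 1).card
      = 1 := by
    rw [A_count_eq n (by omega)]; decide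
  rw [hsplit, card_union_of_disjoint hd, card_product, card_product, hA2, A_filt_one,
    B_filt_dvd2, B_filt_eq2]
  decide

lemma N_four (hn : 2 ≤ n) :
    (univ.filter fun p : Multiplicative (ZMod (2 ^ n)) × QuaternionGroup 2 => orderOf p = 4).card
      = 28 := by
  classical
  have hsplit : (univ.filter
        fun p : Multiplicative (ZMod (2 ^ n)) × QuaternionGroup 2 => orderOf p = 4)
      = ((univ.filter fun x : Multiplicative (ZMod (2 ^ n)) => orderOf x = 2 ^ 2) ×ˢ
          (univ.filter fun y : QuaternionGroup 2 => orderOf y ∣ 4))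
        ∪ ((univ.filter fun x : Multiplicative (ZMod (2 ^ n)) => orderOf x ∣ 2 ^ 1) ×ˢ
          (univ.filter fun y : QuaternionGroup 2 => orderOf y = 4)) := by
    ext p
    simp only [mem_filter, mem_union, mem_product, mem_univ, true_and, Prod.orderOf, pow_one]
    have h4 : (2 : ℕ) ^ 2 = 4 := by norm_num
    rw [h4]
    exact my_lcm4 _ _
  have hd : Disjoint
      ((univ.filter fun x : Multiplicative (ZMod (2 ^ n)) => orderOf x = 2 ^ 2) ×ˢ
        (univ.filter fun y : QuaternionGroup 2 => orderOf y ∣ 4))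
      ((univ.filter fun x : Multiplicative (ZMod (2 ^ n)) => orderOf x ∣ 2 ^ 1) ×ˢ
        (univ.filter fun y : QuaternionGroup 2 => orderOf y = 4)) := by
    rw [Finset.disjoint_left]
    intro p hp1 hp2
    have h1 := (mem_filter.mp (mem_product.mp hp1).1).2
    have h2 := (mem_filter.mp (mem_product.mp hp2).1).2
    rw [h1] at h2
    norm_num at h2
  have hA4 : (univ.filter fun x : Multiplicative (ZMod (2 ^ n)) => orderOf x = 2 ^ 2).card
      = 2 := by
    rw [A_count_eq n hn]; decide
  rw [hsplit, card_union_of_disjoint hd, card_product, card_product, hA4,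
    A_count_dvd n 1 (by omega), B_filt_dvd4, B_filt_eq4]
  rw [B_card8]
  decide

lemma N_big {k : ℕ} (hk3 : 3 ≤ k) (hkn : k ≤ n) :
    (univ.filter
        fun p : Multiplicative (ZMod (2 ^ n)) × QuaternionGroup 2 => orderOf p = 2 ^ k).card
      = Nat.totient (2 ^ k) * 8 := by
  classical
  have hsplit : (univ.filter
        fun p : Multiplicative (ZMod (2 ^ n)) × QuaternionGroup 2 => orderOf p = 2 ^ k)
      = (univ.filter fun x : Multiplicative (ZMod (2 ^ n)) => orderOf x = 2 ^ k) ×ˢ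
          (univ : Finset (QuaternionGroup 2)) := by
    ext p
    simp only [mem_filter, mem_product, mem_univ, true_and, and_true, Prod.orderOf]
    refine my_lcm_big (oB_dvd p.2) hk3 ?_
    obtain ⟨j, _, hj⟩ := A_orderOf_pow n p.1
    exact ⟨j, hj⟩
  rw [hsplit, card_product, A_count_eq n hkn, B_card8]

lemma N_zero (hn : 2 ≤ n) {k : ℕ} (hkn : n < k) :
    (univ.filter
        fun p : Multiplicative (ZMod (2 ^ n)) × QuaternionGroup 2 => orderOf p = 2 ^ k).card
      = 0 := by
  classical
  rw [Finset.card_eq_zero]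
  rw [Finset.eq_empty_iff_forall_notMem]
  intro p hp
  have h := (mem_filter.mp hp).2
  have hdvd : orderOf p ∣ 2 ^ n := by
    rw [Prod.orderOf]
    refine Nat.lcm_dvd ?_ ?_
    · obtain ⟨j, hj, hx⟩ := A_orderOf_pow n p.1
      exact hx ▸ pow_dvd_pow 2 hj
    · refine (oB_dvd p.2).trans ?_
      calc (4 : ℕ) = 2 ^ 2 := by norm_num
      _ ∣ 2 ^ n := pow_dvd_pow 2 hn
  rw [h] at hdvd
  have h1 := Nat.le_of_dvd (pow_pos (by norm_num) n) hdvd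
  have h2 : (2 : ℕ) ^ n < 2 ^ k := Nat.pow_lt_pow_right (by norm_num) hkn
  omega
end Nsec
open Finset Subgroup in
theorem stmt_15_aux (n : ℕ) (hn : 2 ≤ n) :
    Nat.card {H : Subgroup (Multiplicative (ZMod (2 ^ n)) × QuaternionGroup 2) //
      IsCyclic ↥H} = 8 * n + 2 := by
  classical
  rw [my_card_cyclic, my_total]
  have hcard : Fintype.card (Multiplicative (ZMod (2 ^ n)) × QuaternionGroup 2)
      = 2 ^ (n + 3) := by
    rw [Fintype.card_prod, A_card, QuaternionGroup.card, pow_add]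
    norm_num
  rw [hcard, Nat.divisors_prime_pow Nat.prime_two, Finset.sum_map]
  simp only [Function.Embedding.coeFn_mk]
  -- values of the summand
  have hc1 : ((univ.image fun g : Multiplicative (ZMod (2 ^ n)) × QuaternionGroup 2 =>
      zpowers g).filter
        fun H : Subgroup (Multiplicative (ZMod (2 ^ n)) × QuaternionGroup 2) =>
          Nat.card ↥H = 1).card = 1 := by
    have h := my_key (G := Multiplicative (ZMod (2 ^ n)) × QuaternionGroup 2) 1
    rwa [Nat.totient_one, mul_one, N_one n] at h
  have hc2 : ((univ.image fun g : Multiplicative (ZMod (2 ^ n)) × QuaternionGroup 2 =>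
      zpowers g).filter
        fun H : Subgroup (Multiplicative (ZMod (2 ^ n)) × QuaternionGroup 2) =>
          Nat.card ↥H = 2).card = 3 := by
    have h := my_key (G := Multiplicative (ZMod (2 ^ n)) × QuaternionGroup 2) 2
    rwa [(by decide : Nat.totient 2 = 1), mul_one, N_two n hn] at h
  have hc4 : ((univ.image fun g : Multiplicative (ZMod (2 ^ n)) × QuaternionGroup 2 =>
      zpowers g).filter
        fun H : Subgroup (Multiplicative (ZMod (2 ^ n)) × QuaternionGroup 2) =>
          Nat.card ↥H = 4).card = 14 := by
    have h := my_key (G := Multiplicative (ZMod (2 ^ n)) × QuaternionGroup 2) 4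
    rw [(by decide : Nat.totient 4 = 2), N_four n hn] at h
    omega
  have hcbig : ∀ k, 3 ≤ k → k ≤ n →
      ((univ.image fun g : Multiplicative (ZMod (2 ^ n)) × QuaternionGroup 2 =>
        zpowers g).filter
          fun H : Subgroup (Multiplicative (ZMod (2 ^ n)) × QuaternionGroup 2) =>
            Nat.card ↥H = 2 ^ k).card = 8 := by
    intro k hk3 hkn
    have h := my_key (G := Multiplicative (ZMod (2 ^ n)) × QuaternionGroup 2) (2 ^ k)
    rw [N_big n hk3 hkn] at h
    have ht : 0 < Nat.totient (2 ^ k) := Nat.totient_pos.mpr (pow_pos (by norm_num) k)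
    have h8 : Nat.totient (2 ^ k) * 8 = 8 * Nat.totient (2 ^ k) := Nat.mul_comm _ _
    rw [h8] at h
    exact Nat.eq_of_mul_eq_mul_right ht h
  have hczero : ∀ k, n < k →
      ((univ.image fun g : Multiplicative (ZMod (2 ^ n)) × QuaternionGroup 2 =>
        zpowers g).filter
          fun H : Subgroup (Multiplicative (ZMod (2 ^ n)) × QuaternionGroup 2) =>
            Nat.card ↥H = 2 ^ k).card = 0 := by
    intro k hkn
    have h := my_key (G := Multiplicative (ZMod (2 ^ n)) × QuaternionGroup 2) (2 ^ k)
    rw [N_zero n hn hkn] at h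
    have ht : 0 < Nat.totient (2 ^ k) := Nat.totient_pos.mpr (pow_pos (by norm_num) k)
    rcases Nat.mul_eq_zero.mp h with h' | h'
    · exact h'
    · omega
  -- split the sum
  rw [Finset.range_eq_Ico]
  rw [← Finset.sum_Ico_consecutive _ (show 0 ≤ 3 by omega) (show 3 ≤ n + 3 + 1 by omega)]
  rw [← Finset.sum_Ico_consecutive _ (show 3 ≤ n + 1 by omega) (show n + 1 ≤ n + 3 + 1 by omega)]
  have p1 : ∑ k ∈ Ico 0 3, ((univ.image
      fun g : Multiplicative (ZMod (2 ^ n)) × QuaternionGroup 2 => zpowers g).filter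
        fun H : Subgroup (Multiplicative (ZMod (2 ^ n)) × QuaternionGroup 2) =>
          Nat.card ↥H = 2 ^ k).card = 18 := by
    rw [← Finset.range_eq_Ico, Finset.sum_range_succ, Finset.sum_range_succ,
      Finset.sum_range_one]
    simp only [pow_zero, pow_one, (by norm_num : (2 : ℕ) ^ 2 = 4)]
    rw [hc1, hc2, hc4]
  have p2 : ∑ k ∈ Ico 3 (n + 1), ((univ.image
      fun g : Multiplicative (ZMod (2 ^ n)) × QuaternionGroup 2 => zpowers g).filter
        fun H : Subgroup (Multiplicative (ZMod (2 ^ n)) × QuaternionGroup 2) =>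
          Nat.card ↥H = 2 ^ k).card = 8 * (n - 2) := by
    rw [Finset.sum_congr rfl fun k hk => hcbig k (mem_Ico.mp hk).1
      (by have := (mem_Ico.mp hk).2; omega)]
    rw [Finset.sum_const, Nat.card_Ico, smul_eq_mul]
    omega
  have p3 : ∑ k ∈ Ico (n + 1) (n + 3 + 1), ((univ.image
      fun g : Multiplicative (ZMod (2 ^ n)) × QuaternionGroup 2 => zpowers g).filter
        fun H : Subgroup (Multiplicative (ZMod (2 ^ n)) × QuaternionGroup 2) =>
          Nat.card ↥H = 2 ^ k).card = 0 :=
    Finset.sum_eq_zero fun k hk => hczero k (by have := (mem_Ico.mp hk).1; omega)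
  rw [p1, p2, p3]
  omega

theorem stmt_15 (n : ℕ) (hn : 2 ≤ n) :
    Nat.card {H : Subgroup (Multiplicative (ZMod (2 ^ n)) × QuaternionGroup 2) //
      IsCyclic ↥H} = 8 * n + 2 :=
  stmt_15_aux n hn
end

section
/- For every constant c with 0 < c < 1 there exists a finite group G such that csd(G) > c while G is not an Iwasawa group, i.e., G has subgroups H and K with HK ≠ KH. Hence there is no constant c ∈ (0,1) such that csd(G) > c implies that G is an Iwasawa group. -/
open Pointwise

namespace CsdP

/-- central parameter -/
def eps (m : ℕ) : ZMod (2^(m+1)) := (2^m : ℕ)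

/-- The underlying type of the central product `D8 ∘ Z_{2^{m+1}}` (Pauli-like group). -/
def Gr (m : ℕ) : Type := ZMod (2^(m+1)) × ZMod 2 × ZMod 2

variable {m : ℕ}

instance : NeZero (2^(m+1)) := ⟨by positivity⟩

instance : Fintype (Gr m) := inferInstanceAs (Fintype (ZMod (2^(m+1)) × ZMod 2 × ZMod 2))
instance : DecidableEq (Gr m) := inferInstanceAs (DecidableEq (ZMod (2^(m+1)) × ZMod 2 × ZMod 2))

def beta (m : ℕ) (b a : ZMod 2) : ZMod (2^(m+1)) := if b = 1 ∧ a = 1 then eps m else 0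

lemma eps_add_eps : eps m + eps m = 0 := by
  have : ((2^m : ℕ) : ZMod (2^(m+1))) + ((2^m : ℕ) : ZMod (2^(m+1)))
      = ((2^(m+1) : ℕ) : ZMod (2^(m+1))) := by
    rw [← Nat.cast_add]; norm_num [pow_succ, two_mul, mul_comm]
  simpa [eps, ZMod.natCast_self] using this

lemma eps_ne_zero : eps m ≠ 0 := by
  simp only [eps, Ne, ZMod.natCast_eq_zero_iff]
  intro h
  have := Nat.le_of_dvd (by positivity) h
  exact absurd (pow_le_pow_iff_right₀ (by norm_num : (1:ℕ) < 2) |>.mp this) (by omega)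

lemma two_cases : ∀ x : ZMod 2, x = 0 ∨ x = 1 := by decide

lemma beta_zero_left (a : ZMod 2) : beta m 0 a = 0 := by simp [beta]
lemma beta_zero_right (b : ZMod 2) : beta m b 0 = 0 := by
  simp only [beta]; rw [if_neg]; rintro ⟨-, h⟩; exact absurd h (by decide)

lemma beta_cocycle (b₁ b₂ a₂ a₃ : ZMod 2) :
    beta m b₁ a₂ + beta m (b₁+b₂) a₃ = beta m b₂ a₃ + beta m b₁ (a₂+a₃) := by
  have h2 : ∀ x : ZMod 2, x = 0 ∨ x = 1 := two_cases
  rcases h2 b₁ with rfl|rfl <;> rcases h2 b₂ with rfl|rfl <;>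
    rcases h2 a₂ with rfl|rfl <;> rcases h2 a₃ with rfl|rfl <;>
    simp [beta, eps_add_eps, add_comm]

instance : One (Gr m) := ⟨((0 : ZMod (2^(m+1))), (0 : ZMod 2), (0 : ZMod 2))⟩
instance : Mul (Gr m) :=
  ⟨fun g h => (g.1 + h.1 + beta m g.2.2 h.2.1, g.2.1 + h.2.1, g.2.2 + h.2.2)⟩
instance : Inv (Gr m) := ⟨fun g => (-g.1 - beta m g.2.2 g.2.1, g.2.1, g.2.2)⟩

lemma mul_def (g h : Gr m) :
    g * h = (g.1 + h.1 + beta m g.2.2 h.2.1, g.2.1 + h.2.1, g.2.2 + h.2.2) := rfl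
lemma one_def : (1 : Gr m) = ((0 : ZMod (2^(m+1))), (0 : ZMod 2), (0 : ZMod 2)) := rfl
lemma inv_def (g : Gr m) : g⁻¹ = (-g.1 - beta m g.2.2 g.2.1, g.2.1, g.2.2) := rfl

lemma gr_ext_iff {x y : Gr m} : x = y ↔ x.1 = y.1 ∧ x.2.1 = y.2.1 ∧ x.2.2 = y.2.2 := by
  constructor
  · rintro rfl; exact ⟨rfl, rfl, rfl⟩
  · rintro ⟨h1, h2, h3⟩
    show (x : ZMod (2^(m+1)) × ZMod 2 × ZMod 2) = y
    exact Prod.ext h1 (Prod.ext h2 h3)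

instance : Group (Gr m) where
  mul_assoc g h k := by
    apply gr_ext_iff.mpr
    refine ⟨?_, show g.2.1 + h.2.1 + k.2.1 = g.2.1 + (h.2.1 + k.2.1) by ring,
      show g.2.2 + h.2.2 + k.2.2 = g.2.2 + (h.2.2 + k.2.2) by ring⟩
    show g.1 + h.1 + beta m g.2.2 h.2.1 + k.1 + beta m (g.2.2 + h.2.2) k.2.1
      = g.1 + (h.1 + k.1 + beta m h.2.2 k.2.1) + beta m g.2.2 (h.2.1 + k.2.1)
    have := beta_cocycle (m := m) g.2.2 h.2.2 h.2.1 k.2.1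
    linear_combination this
  one_mul g := gr_ext_iff.mpr ⟨show 0 + g.1 + beta m 0 g.2.1 = g.1 by simp [beta_zero_left],
    show (0 : ZMod 2) + g.2.1 = g.2.1 by simp, show (0 : ZMod 2) + g.2.2 = g.2.2 by simp⟩
  mul_one g := gr_ext_iff.mpr ⟨show g.1 + 0 + beta m g.2.2 0 = g.1 by simp [beta_zero_right],
    show g.2.1 + (0 : ZMod 2) = g.2.1 by simp, show g.2.2 + (0 : ZMod 2) = g.2.2 by simp⟩
  inv_mul_cancel g := by
    apply gr_ext_iff.mpr
    have h2 : ∀ x : ZMod 2, x * 2 = 0 := by decide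
    refine ⟨show -g.1 - beta m g.2.2 g.2.1 + g.1 + beta m g.2.2 g.2.1 = 0 by ring,
      show g.2.1 + g.2.1 = 0 by ring_nf; exact h2 _, show g.2.2 + g.2.2 = 0 by ring_nf; exact h2 _⟩

lemma zmod2_mul_two : ∀ x : ZMod 2, x * 2 = 0 := by decide
lemma zmod2_add_self : ∀ x : ZMod 2, x + x = 0 := by decide

def z (m : ℕ) : Gr m := (eps m, 0, 0)

lemma z_ne_one : z m ≠ 1 := by
  intro h
  exact eps_ne_zero ((gr_ext_iff.mp h).1)

lemma beta_add_left (b b' a : ZMod 2) :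
    beta m (b + b') a = beta m b a + beta m b' a := by
  rcases two_cases b with rfl|rfl <;> rcases two_cases b' with rfl|rfl <;>
    rcases two_cases a with rfl|rfl <;>
    simp [beta, eps_add_eps.symm] <;> simp [eps_add_eps]

lemma beta_eq_zero_or_eps (b a : ZMod 2) : beta m b a = 0 ∨ beta m b a = eps m := by
  unfold beta; split <;> simp

lemma z_mul (g : Gr m) : z m * g = (eps m + g.1, g.2.1, g.2.2) := by
  apply gr_ext_iff.mpr
  exact ⟨show eps m + g.1 + beta m 0 g.2.1 = eps m + g.1 by rw [beta_zero_left, add_zero],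
    show (0 : ZMod 2) + g.2.1 = g.2.1 from zero_add _, show (0 : ZMod 2) + g.2.2 = g.2.2 from zero_add _⟩

lemma conj_formula (g h : Gr m) : g * h * g⁻¹ = h ∨ g * h * g⁻¹ = z m * h := by
  have e1 : g * h * g⁻¹
      = (h.1 + (beta m g.2.2 h.2.1 + beta m h.2.2 g.2.1), h.2.1, h.2.2) := by
    apply gr_ext_iff.mpr
    refine ⟨show g.1 + h.1 + beta m g.2.2 h.2.1 + (-g.1 - beta m g.2.2 g.2.1)
        + beta m (g.2.2 + h.2.2) g.2.1 = _ by rw [beta_add_left]; ring,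
      show g.2.1 + h.2.1 + g.2.1 = h.2.1 by ring_nf; simp [zmod2_mul_two],
      show g.2.2 + h.2.2 + g.2.2 = h.2.2 by ring_nf; simp [zmod2_mul_two]⟩
  rcases beta_eq_zero_or_eps (m := m) g.2.2 h.2.1 with e2|e2 <;>
    rcases beta_eq_zero_or_eps (m := m) h.2.2 g.2.1 with e3|e3
  · left; rw [e1, e2, e3]; apply gr_ext_iff.mpr; exact ⟨by ring, rfl, rfl⟩
  · right; rw [e1, e2, e3, z_mul]; apply gr_ext_iff.mpr; exact ⟨by ring, rfl, rfl⟩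
  · right; rw [e1, e2, e3, z_mul]; apply gr_ext_iff.mpr; exact ⟨by ring, rfl, rfl⟩
  · left; rw [e1, e2, e3, eps_add_eps]; apply gr_ext_iff.mpr; exact ⟨by ring, rfl, rfl⟩

lemma normal_of_z_mem {H : Subgroup (Gr m)} (hz : z m ∈ H) : H.Normal := by
  constructor
  intro h hh g
  rcases conj_formula g h with e | e
  · rw [e]; exact hh
  · rw [e]; exact H.mul_mem hz hh

lemma comm_of_z_mem_left {H K : Subgroup (Gr m)} (hz : z m ∈ H) :
    (H : Set (Gr m)) * K = (K : Set (Gr m)) * H := by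
  haveI := normal_of_z_mem hz
  exact (Subgroup.set_mul_normal_comm (K : Set (Gr m)) H).symm

lemma comm_of_z_mem_right {H K : Subgroup (Gr m)} (hz : z m ∈ K) :
    (H : Set (Gr m)) * K = (K : Set (Gr m)) * H := by
  haveI := normal_of_z_mem hz
  exact Subgroup.set_mul_normal_comm (H : Set (Gr m)) K

lemma sq_def (g : Gr m) : g * g = (g.1 + g.1 + beta m g.2.2 g.2.1, 0, 0) := by
  rw [mul_def]; apply gr_ext_iff.mpr
  exact ⟨rfl, zmod2_add_self _, zmod2_add_self _⟩

lemma exists_mul_eq_eps {w : ZMod (2^(m+1))} (hw : w ≠ 0) :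
    ∃ c : ZMod (2^(m+1)), c * w = eps m := by
  have ht : w.val ≠ 0 := by
    simpa [ZMod.val_eq_zero] using hw
  have hlt : w.val < 2^(m+1) := ZMod.val_lt w
  set j := (w.val).factorization 2 with hj
  set u := w.val / 2^j with hu
  have htu : 2^j * u = w.val := Nat.ordProj_mul_ordCompl_eq_self w.val 2
  have hu2 : ¬ 2 ∣ u := Nat.not_dvd_ordCompl Nat.prime_two ht
  have hjm : j ≤ m := by
    have h1 : 2^j ≤ w.val := Nat.le_of_dvd (Nat.pos_of_ne_zero ht) (Nat.ordProj_dvd _ 2)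
    have := lt_of_le_of_lt h1 hlt
    have := (pow_lt_pow_iff_right₀ (by norm_num : (1:ℕ) < 2)).mp this
    omega
  have hcop : Nat.Coprime u (2^(m+1)) := by
    apply Nat.Coprime.pow_right
    rwa [Nat.coprime_comm, Nat.Prime.coprime_iff_not_dvd Nat.prime_two]
  set v := ZMod.unitOfCoprime u hcop with hv
  refine ⟨(2^(m-j) : ℕ) * (↑(v⁻¹) : ZMod (2^(m+1))), ?_⟩
  have hw' : w = ((2^j * u : ℕ) : ZMod (2^(m+1))) := by
    rw [htu, ZMod.natCast_val, ZMod.cast_id]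
  rw [hw']
  push_cast
  have hvu : (↑(v⁻¹) : ZMod (2^(m+1))) * (u : ZMod (2^(m+1))) = 1 := by
    have : (↑(v⁻¹) : ZMod (2^(m+1))) * (↑v : ZMod (2^(m+1))) = 1 := by
      rw [← Units.val_mul, inv_mul_cancel, Units.val_one]
    simpa [hv, ZMod.coe_unitOfCoprime] using this
  have hpow : (2:ZMod (2^(m+1)))^(m-j) * (2:ZMod (2^(m+1)))^j = 2^m := by
    rw [← pow_add, Nat.sub_add_cancel hjm]
  calc (2:ZMod (2^(m+1)))^(m-j) * ↑(v⁻¹) * ((2:ZMod (2^(m+1)))^j * ↑u)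
      = ((2:ZMod (2^(m+1)))^(m-j) * 2^j) * (↑(v⁻¹) * ↑u) := by ring
    _ = 2^m := by rw [hpow, hvu, mul_one]
    _ = eps m := by rw [eps]; push_cast; ring

lemma add_self_cases {y : ZMod (2^(m+1))} (h : y + y = 0) : y = 0 ∨ y = eps m := by
  have h1 : ((y.val + y.val : ℕ) : ZMod (2^(m+1))) = 0 := by
    push_cast [ZMod.natCast_val, ZMod.cast_id]; exact h
  rw [ZMod.natCast_eq_zero_iff] at h1
  obtain ⟨k, hk⟩ := h1
  have hlt : y.val < 2^(m+1) := ZMod.val_lt y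
  have hpow : 2^(m+1) = 2 * 2^m := by ring
  have hk2 : k < 2 := by
    by_contra hk2
    push_neg at hk2
    have : 2^(m+1) * 2 ≤ 2^(m+1) * k := Nat.mul_le_mul_left _ hk2
    omega
  have hy : ((y.val : ℕ) : ZMod (2^(m+1))) = y := by
    rw [ZMod.natCast_val, ZMod.cast_id]
  interval_cases k
  · left
    have hv : y.val = 0 := by omega
    rw [← hy, hv]; simp
  · right
    have hv : y.val = 2^m := by omega
    rw [← hy, hv]; rfl

lemma eps_val : (eps m).val = 2^m := by
  rw [eps, ZMod.val_natCast, Nat.mod_eq_of_lt]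
  exact pow_lt_pow_right₀ (by norm_num) (by omega)

lemma val_flip (t : ZMod (2^(m+1))) : ((t + eps m).val < 2^m) ↔ ¬ (t.val < 2^m) := by
  have hlt : t.val < 2^(m+1) := ZMod.val_lt t
  have hpow : 2^(m+1) = 2 * 2^m := by ring
  rw [ZMod.val_add, eps_val]
  by_cases h : t.val < 2^m
  · rw [Nat.mod_eq_of_lt (by omega)]; omega
  · rw [Nat.mod_eq_sub_mod (by omega), Nat.mod_eq_of_lt (by omega)]; omega

def cen (m : ℕ) (w : ZMod (2^(m+1))) : Gr m := (w, 0, 0)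

def phi (m : ℕ) : Multiplicative (ZMod (2^(m+1))) →* Gr m where
  toFun w := cen m (Multiplicative.toAdd w)
  map_one' := rfl
  map_mul' x y := by
    rw [mul_def]; apply gr_ext_iff.mpr
    refine ⟨?_, by simp [cen], by simp [cen]⟩
    show Multiplicative.toAdd (x * y) = Multiplicative.toAdd x + Multiplicative.toAdd y
      + beta m 0 0
    simp [beta_zero_left]

lemma central_zpow (w : ZMod (2^(m+1))) (c : ℤ) :
    (cen m w)^c = cen m (c • w) := by
  have h1 : cen m w = phi m (Multiplicative.ofAdd w) := rfl
  rw [h1, ← map_zpow]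
  have h2 : (Multiplicative.ofAdd w)^c = Multiplicative.ofAdd (c • w) := by
    rw [← ofAdd_zsmul]
  rw [h2]
  rfl

lemma z_mem_zpowers_of_sq_ne_one {g : Gr m} (hg : g * g ≠ 1) :
    z m ∈ Subgroup.zpowers g := by
  set w := g.1 + g.1 + beta m g.2.2 g.2.1 with hw
  have hsq : g * g = cen m w := sq_def g
  have hw0 : w ≠ 0 := by
    intro h
    apply hg
    rw [hsq, h]; rfl
  obtain ⟨c, hc⟩ := exists_mul_eq_eps hw0
  have hz : (g * g)^((c.val : ℤ)) = z m := by
    rw [hsq, central_zpow]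
    have h3 : ((c.val : ℤ)) • w = c * w := by
      rw [zsmul_eq_mul]
      push_cast [ZMod.natCast_val, ZMod.cast_id]
      rfl
    rw [h3, hc]; rfl
  rw [← hz]
  exact Subgroup.zpow_mem _ (Subgroup.mul_mem _ (Subgroup.mem_zpowers g) (Subgroup.mem_zpowers g)) _

lemma zpowers_of_sq_eq_one {g x : Gr m} (hg : g * g = 1) (hx : x ∈ Subgroup.zpowers g) :
    x = 1 ∨ x = g := by
  obtain ⟨n, hn⟩ := Subgroup.mem_zpowers_iff.mp hx
  have h2 : g^(2:ℤ) = 1 := by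
    rw [show (2:ℤ) = 1 + 1 by norm_num, zpow_add, zpow_one]; exact hg
  have hdecomp : g^n = g^(n % 2) := by
    conv_lhs => rw [← Int.emod_add_mul_ediv n 2]
    rw [zpow_add, zpow_mul, h2, one_zpow, mul_one]
  rcases Int.emod_two_eq n with h|h
  · left; rw [← hn, hdecomp, h, zpow_zero]
  · right; rw [← hn, hdecomp, h, zpow_one]

section Generic
variable {G : Type*} [Group G]

lemma isCyclic_zpowers (g : G) : IsCyclic ↥(Subgroup.zpowers g) := by
  refine ⟨⟨⟨g, Subgroup.mem_zpowers g⟩, fun x => ?_⟩⟩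
  obtain ⟨n, hn⟩ := Subgroup.mem_zpowers_iff.mp x.2
  exact ⟨n, Subtype.ext (by rw [← hn]; rfl)⟩

lemma exists_zpowers_of_isCyclic {H : Subgroup G} (h : IsCyclic ↥H) :
    ∃ g : G, H = Subgroup.zpowers g := by
  obtain ⟨g, hg⟩ := h.exists_generator
  refine ⟨(g : G), le_antisymm ?_ (Subgroup.zpowers_le.mpr g.2)⟩
  intro x hx
  obtain ⟨n, hn⟩ := Subgroup.mem_zpowers_iff.mp (hg ⟨x, hx⟩)
  have := congrArg Subtype.val hn
  exact Subgroup.mem_zpowers_iff.mpr ⟨n, by simpa using this⟩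

end Generic

/-- the two non-permuting involutions -/
def x0 (m : ℕ) : Gr m := (0, 1, 0)
def y0 (m : ℕ) : Gr m := (0, 0, 1)

lemma x0_sq : x0 m * x0 m = 1 := by
  rw [mul_def, one_def]; apply gr_ext_iff.mpr
  refine ⟨?_, ?_, ?_⟩
  · show (0 : ZMod (2^(m+1))) + 0 + beta m 0 1 = 0
    rw [beta_zero_left]; ring
  · show (1 : ZMod 2) + 1 = 0
    decide
  · show (0 : ZMod 2) + 0 = 0
    decide

lemma y0_sq : y0 m * y0 m = 1 := by
  rw [mul_def, one_def]; apply gr_ext_iff.mpr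
  refine ⟨?_, ?_, ?_⟩
  · show (0 : ZMod (2^(m+1))) + 0 + beta m 1 0 = 0
    rw [beta_zero_right]; ring
  · show (0 : ZMod 2) + 0 = 0
    decide
  · show (1 : ZMod 2) + 1 = 0
    decide

lemma x0_mul_y0 : x0 m * y0 m = ((0 : ZMod (2^(m+1))), 1, 1) := by
  rw [mul_def]; apply gr_ext_iff.mpr
  refine ⟨?_, ?_, ?_⟩
  · show (0 : ZMod (2^(m+1))) + 0 + beta m 0 0 = 0
    rw [beta_zero_left]; ring
  · show (1 : ZMod 2) + 0 = 1
    decide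
  · show (0 : ZMod 2) + 1 = 1
    decide

lemma y0_mul_x0 : y0 m * x0 m = ((eps m : ZMod (2^(m+1))), 1, 1) := by
  rw [mul_def]; apply gr_ext_iff.mpr
  refine ⟨?_, ?_, ?_⟩
  · show (0 : ZMod (2^(m+1))) + 0 + beta m 1 1 = eps m
    simp [beta]
  · show (0 : ZMod 2) + 1 = 1
    decide
  · show (1 : ZMod 2) + 0 = 1
    decide

lemma noncomm :
    (Subgroup.zpowers (x0 m) : Set (Gr m)) * (Subgroup.zpowers (y0 m) : Set (Gr m)) ≠
    (Subgroup.zpowers (y0 m) : Set (Gr m)) * (Subgroup.zpowers (x0 m) : Set (Gr m)) := by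
  intro hEq
  have hmem : x0 m * y0 m ∈
      (Subgroup.zpowers (x0 m) : Set (Gr m)) * (Subgroup.zpowers (y0 m) : Set (Gr m)) :=
    Set.mul_mem_mul (Subgroup.mem_zpowers (x0 m)) (Subgroup.mem_zpowers (y0 m))
  rw [hEq] at hmem
  obtain ⟨a, ha, b, hb, hab⟩ := hmem
  rcases zpowers_of_sq_eq_one y0_sq ha with rfl|rfl <;>
    rcases zpowers_of_sq_eq_one x0_sq hb with rfl|rfl <;>
    simp only [one_mul, mul_one] at hab <;> rw [x0_mul_y0] at hab
  · rw [one_def] at hab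
    have h21 : (0 : ZMod 2) = 1 := (gr_ext_iff.mp hab).2.1
    exact absurd h21 (by decide)
  · rw [x0] at hab
    have h22 : (0 : ZMod 2) = 1 := (gr_ext_iff.mp hab).2.2
    exact absurd h22 (by decide)
  · rw [y0] at hab
    have h21 : (0 : ZMod 2) = 1 := (gr_ext_iff.mp hab).2.1
    exact absurd h21 (by decide)
  · rw [y0_mul_x0] at hab
    have h1 : eps m = 0 := (gr_ext_iff.mp hab).1
    exact absurd h1 eps_ne_zero

instance : Finite (Subgroup (Gr m)) :=
  Finite.of_injective (fun H => (H : Set (Gr m))) SetLike.coe_injective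

/-- involutions (and identity) -/
def E (m : ℕ) : Type := {g : Gr m // g * g = 1}

instance : Finite (E m) := inferInstanceAs (Finite {g : Gr m // g * g = 1})

lemma sq_one_fst {g : Gr m} (hg : g * g = 1) :
    g.1 + g.1 + beta m g.2.2 g.2.1 = 0 :=
  (gr_ext_iff.mp ((sq_def g).symm.trans hg)).1

lemma card_E_le : Nat.card (E m) ≤ 8 := by
  have hinj : Function.Injective (fun e : E m =>
      ((e.1.2.1, e.1.2.2, decide (e.1.1.val < 2^m)) : ZMod 2 × ZMod 2 × Bool)) := by
    rintro e f h
    obtain ⟨h1, h2, h3⟩ : e.1.2.1 = f.1.2.1 ∧ e.1.2.2 = f.1.2.2 ∧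
        decide (e.1.1.val < 2^m) = decide (f.1.1.val < 2^m) := by
      refine ⟨congrArg (fun p => p.1) h, congrArg (fun p => p.2.1) h,
        congrArg (fun p => p.2.2) h⟩
    have he1 := sq_one_fst e.2
    have hf1 := sq_one_fst f.2
    rw [← h1, ← h2] at hf1
    have hdiff : (e.1.1 - f.1.1) + (e.1.1 - f.1.1) = 0 := by
      linear_combination he1 - hf1
    apply Subtype.ext
    rw [gr_ext_iff]
    refine ⟨?_, h1, h2⟩
    rcases add_self_cases hdiff with h0|heps
    · linear_combination h0
    · exfalso
      have hee : e.1.1 = f.1.1 + eps m := by linear_combination heps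
      have hflip := val_flip (m := m) f.1.1
      rw [← hee] at hflip
      rw [decide_eq_decide] at h3
      tauto
  calc Nat.card (E m) ≤ Nat.card (ZMod 2 × ZMod 2 × Bool) :=
        Nat.card_le_card_of_injective _ hinj
    _ = 8 := by
        rw [Nat.card_eq_fintype_card]
        simp [Fintype.card_prod]

def CycT (m : ℕ) : Type := {H : Subgroup (Gr m) // IsCyclic ↥H}

instance : Finite (CycT m) := inferInstanceAs (Finite {H : Subgroup (Gr m) // IsCyclic ↥H})

def Comm (m : ℕ) (q : CycT m × CycT m) : Prop :=
  (q.1.1 : Set (Gr m)) * (q.2.1 : Set (Gr m)) = (q.2.1 : Set (Gr m)) * (q.1.1 : Set (Gr m))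

lemma bad_struct {H K : Subgroup (Gr m)} (hH : IsCyclic ↥H) (hK : IsCyclic ↥K)
    (hnc : (H : Set (Gr m)) * (K : Set (Gr m)) ≠ (K : Set (Gr m)) * (H : Set (Gr m))) :
    ∃ e : E m × E m, H = Subgroup.zpowers e.1.1 ∧ K = Subgroup.zpowers e.2.1 := by
  have hzH : z m ∉ H := fun hz => hnc (comm_of_z_mem_left hz)
  have hzK : z m ∉ K := fun hz => hnc (comm_of_z_mem_right hz)
  obtain ⟨g, rfl⟩ := exists_zpowers_of_isCyclic hH
  obtain ⟨k, rfl⟩ := exists_zpowers_of_isCyclic hK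
  have hg : g * g = 1 := by
    by_contra h
    exact hzH (z_mem_zpowers_of_sq_ne_one h)
  have hk : k * k = 1 := by
    by_contra h
    exact hzK (z_mem_zpowers_of_sq_ne_one h)
  exact ⟨(⟨g, hg⟩, ⟨k, hk⟩), rfl, rfl⟩

lemma card_bad_le : Nat.card {q : CycT m × CycT m // ¬ Comm m q} ≤ 64 := by
  have hex : ∀ q : {q : CycT m × CycT m // ¬ Comm m q},
      ∃ e : E m × E m, q.1.1.1 = Subgroup.zpowers e.1.1 ∧
        q.1.2.1 = Subgroup.zpowers e.2.1 :=
    fun q => bad_struct q.1.1.2 q.1.2.2 q.2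
  classical
  have hinj : Function.Injective (fun q : {q : CycT m × CycT m // ¬ Comm m q} =>
      Classical.choose (hex q)) := by
    intro q q' h
    replace h : Classical.choose (hex q) = Classical.choose (hex q') := h
    obtain ⟨hq1, hq2⟩ := Classical.choose_spec (hex q)
    obtain ⟨hq1', hq2'⟩ := Classical.choose_spec (hex q')
    rw [h] at hq1 hq2
    apply Subtype.ext
    apply Prod.ext
    · exact Subtype.ext (hq1.trans hq1'.symm)
    · exact Subtype.ext (hq2.trans hq2'.symm)
  calc Nat.card {q : CycT m × CycT m // ¬ Comm m q}
      ≤ Nat.card (E m × E m) := Nat.card_le_card_of_injective _ hinj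
    _ = Nat.card (E m) * Nat.card (E m) := Nat.card_prod _ _
    _ ≤ 8 * 8 := Nat.mul_le_mul card_E_le card_E_le
    _ = 64 := by norm_num

lemma not_mem_zpowers_of_lt {j j' : ℕ} (hjj : j < j') (hj' : j' ≤ m + 1) :
    cen m ((2^j : ℕ) : ZMod (2^(m+1))) ∉
      Subgroup.zpowers (cen m ((2^j' : ℕ) : ZMod (2^(m+1)))) := by
  intro hmem
  obtain ⟨c, hc⟩ := Subgroup.mem_zpowers_iff.mp hmem
  rw [central_zpow] at hc
  have h1 : (c • ((2^j' : ℕ) : ZMod (2^(m+1))) : ZMod (2^(m+1)))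
      = ((2^j : ℕ) : ZMod (2^(m+1))) := (gr_ext_iff.mp hc).1
  have h2 : (((c * 2^j' : ℤ)) : ZMod (2^(m+1))) = (((2^j : ℤ)) : ZMod (2^(m+1))) := by
    push_cast
    rw [← zsmul_eq_mul]
    exact_mod_cast h1
  rw [ZMod.intCast_eq_intCast_iff] at h2
  have h3 : ((2^(m+1) : ℕ) : ℤ) ∣ (2^j : ℤ) - (c * 2^j' : ℤ) := Int.ModEq.dvd h2
  have h4 : (2:ℤ)^(j+1) ∣ (2^j : ℤ) - (c * 2^j' : ℤ) := by
    refine dvd_trans ?_ h3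
    have : ((2:ℤ)^(m+1)) = ((2^(m+1) : ℕ) : ℤ) := by push_cast; ring
    rw [← this]
    exact pow_dvd_pow 2 (by omega)
  have h5 : (2:ℤ)^(j+1) ∣ (c * 2^j' : ℤ) :=
    Dvd.dvd.mul_left (pow_dvd_pow 2 (by omega)) c
  have h6 : (2:ℤ)^(j+1) ∣ (2^j : ℤ) := by
    have := dvd_add h4 h5
    simpa using this
  have h7 : (2^(j+1) : ℕ) ∣ 2^j := by exact_mod_cast h6
  have := (Nat.pow_dvd_pow_iff_le_right (by norm_num : 1 < 2)).mp h7
  omega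

lemma card_cyc_ge : m + 2 ≤ Nat.card (CycT m) := by
  have hinj : Function.Injective (fun j : Fin (m+2) =>
      (⟨Subgroup.zpowers (cen m ((2^(j:ℕ) : ℕ) : ZMod (2^(m+1)))),
        isCyclic_zpowers _⟩ : CycT m)) := by
    intro j j' h
    have h' : Subgroup.zpowers (cen m ((2^(j:ℕ) : ℕ) : ZMod (2^(m+1))))
        = Subgroup.zpowers (cen m ((2^((j':ℕ)) : ℕ) : ZMod (2^(m+1)))) :=
      congrArg Subtype.val h
    by_contra hne
    rcases Nat.lt_or_ge (j:ℕ) (j':ℕ) with hlt|hge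
    · exact not_mem_zpowers_of_lt hlt (by omega)
        (h' ▸ Subgroup.mem_zpowers _)
    · have hlt : (j':ℕ) < (j:ℕ) := by
        rcases Nat.eq_or_lt_of_le hge with heq|hlt
        · exact absurd (Fin.ext heq.symm) hne
        · exact hlt
      exact not_mem_zpowers_of_lt hlt (by omega)
        (h'.symm ▸ Subgroup.mem_zpowers _)
  have := Nat.card_le_card_of_injective _ hinj
  rwa [Nat.card_eq_fintype_card (α := Fin (m+2)), Fintype.card_fin] at this

def commEquiv (m : ℕ) :
    {pr : Subgroup (Gr m) × Subgroup (Gr m) //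
      IsCyclic ↥pr.1 ∧ IsCyclic ↥pr.2 ∧
      (pr.1 : Set (Gr m)) * (pr.2 : Set (Gr m)) = (pr.2 : Set (Gr m)) * (pr.1 : Set (Gr m))}
    ≃ {q : CycT m × CycT m // Comm m q} where
  toFun x := ⟨(⟨x.1.1, x.2.1⟩, ⟨x.1.2, x.2.2.1⟩), x.2.2.2⟩
  invFun q := ⟨(q.1.1.1, q.1.2.1), q.1.1.2, q.1.2.2, q.2⟩
  left_inv x := rfl
  right_inv q := rfl

lemma csd_eq (m : ℕ) :
    csd (Gr m) = (Nat.card {q : CycT m × CycT m // Comm m q} : ℚ)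
      / (Nat.card (CycT m) : ℚ)^2 := by
  rw [csd, Nat.card_congr (commEquiv m)]
  rfl

lemma card_comm_ge (m : ℕ) :
    Nat.card {q : CycT m × CycT m // Comm m q} + 64 ≥ (Nat.card (CycT m))^2 := by
  classical
  letI : Fintype (CycT m) := Fintype.ofFinite _
  have key : Fintype.card {q : CycT m × CycT m // ¬ Comm m q}
      = Fintype.card (CycT m × CycT m) - Fintype.card {q : CycT m × CycT m // Comm m q} :=
    Fintype.card_subtype_compl _
  have hle : Fintype.card {q : CycT m × CycT m // Comm m q}
      ≤ Fintype.card (CycT m × CycT m) := Fintype.card_subtype_le _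
  have hbad : Nat.card {q : CycT m × CycT m // ¬ Comm m q} ≤ 64 := card_bad_le
  rw [Nat.card_eq_fintype_card] at hbad
  rw [Nat.card_eq_fintype_card, Nat.card_eq_fintype_card]
  have hprod : Fintype.card (CycT m × CycT m)
      = Fintype.card (CycT m) * Fintype.card (CycT m) := Fintype.card_prod _ _
  rw [hprod] at key hle
  rw [key] at hbad
  have h2 := Nat.sub_le_iff_le_add.mp hbad
  rw [pow_two]
  omega

end CsdP

theorem stmt_17 (c : ℚ) (hc0 : 0 < c) (hc1 : c < 1) :
    ∃ (G : Type) (_ : Group G) (_ : Fintype G), csd G > c ∧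
      ∃ H K : Subgroup G, (H : Set G) * (K : Set G) ≠ (K : Set G) * (H : Set G) := by
  have h1c : (0:ℚ) < 1 - c := by linarith
  obtain ⟨n, hn⟩ := exists_nat_gt (64 / (1 - c))
  refine ⟨CsdP.Gr n, inferInstance, inferInstance, ?_, ?_⟩
  · -- csd > c
    rw [CsdP.csd_eq n, gt_iff_lt]
    set t := Nat.card (CsdP.CycT n) with hT
    set a := Nat.card {q : CsdP.CycT n × CsdP.CycT n // CsdP.Comm n q} with hA
    have htn : n + 2 ≤ t := CsdP.card_cyc_ge
    have hcomm : a + 64 ≥ t^2 := CsdP.card_comm_ge n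
    have htq : ((n:ℚ)) + 2 ≤ (t:ℚ) := by exact_mod_cast htn
    have haq : (a:ℚ) + 64 ≥ (t:ℚ)^2 := by exact_mod_cast hcomm
    have ht1 : (1:ℚ) ≤ (t:ℚ) := by
      have : (0:ℚ) ≤ (n:ℚ) := Nat.cast_nonneg n
      linarith
    have ht0 : (0:ℚ) < (t:ℚ)^2 := by nlinarith
    rw [lt_div_iff₀ ht0]
    have h64 : 64 < (1 - c) * (n:ℚ) := by
      have := (div_lt_iff₀ h1c).mp hn
      linarith
    have h64t : 64 < (1 - c) * (t:ℚ) := by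
      have : (1 - c) * (n:ℚ) ≤ (1 - c) * (t:ℚ) :=
        mul_le_mul_of_nonneg_left (by linarith) (le_of_lt h1c)
      linarith
    have htt : (t:ℚ) ≤ (t:ℚ)^2 := by nlinarith
    have h64t2 : 64 < (1 - c) * (t:ℚ)^2 := by
      have : (1 - c) * (t:ℚ) ≤ (1 - c) * (t:ℚ)^2 :=
        mul_le_mul_of_nonneg_left htt (le_of_lt h1c)
      linarith
    nlinarith
  · exact ⟨Subgroup.zpowers (CsdP.x0 n), Subgroup.zpowers (CsdP.y0 n), CsdP.noncomm⟩
end
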